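/- arXiv:2509.14569 — 5 statements merged into one kernel-verified Lean document; each statement's English description precedes it below -/
import Mathlib

section
/- Let p ≥ 1 and q be integers with p² + 4q > 0, set α = (p + √(p² + 4q))/2, β = (p − √(p² + 4q))/2, let a, b be integers with c₁ = (b − aβ)/(α − β) > 0, and define Wₙ = c₁αⁿ − c₂βⁿ where c₂ = (b − aα)/(α − β). Let m, t ≥ 1 be integers, let l₀, …, l_t be integers with lᵢ ≥ 1 − m for all i, and let s₀, …, s_t be natural numbers, not all zero. Then there exist a constant A > 0 and a positive integer K such that for all k ≥ K the weighted sum Σ_{i=0}^{t} sᵢ·W_{mk+lᵢ} is nonzero and |1/(Σ_{i=0}^{t} sᵢ·W_{mk+lᵢ}) − 1/(c₁·Σ_{i=0}^{t} sᵢ·α^{mk+lᵢ})| ≤ A·|β|^{mk}/α^{2mk}. -/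
set_option maxHeartbeats 1600000 in
/-- Lemma 2.3: for the generalized Fibonacci sequence in Binet form with `c₁ > 0`,
the reciprocal of the weighted sum `Σᵢ sᵢ·W_{mk+lᵢ}` is, for all large `k`,
within `A·|β|^{mk}/α^{2mk}` of `1/(c₁·Σᵢ sᵢ·α^{mk+lᵢ})`. -/
theorem reciprocal_weighted_sum_estimate (p q a b : ℤ) (α β c₁ c₂ : ℝ)
    (hp : 1 ≤ p)
    (hdisc : 0 < (p : ℝ) ^ 2 + 4 * q)
    (hα : α = ((p : ℝ) + Real.sqrt ((p : ℝ) ^ 2 + 4 * q)) / 2)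
    (hβ : β = ((p : ℝ) - Real.sqrt ((p : ℝ) ^ 2 + 4 * q)) / 2)
    (hc₁ : c₁ = ((b : ℝ) - a * β) / (α - β))
    (hc₂ : c₂ = ((b : ℝ) - a * α) / (α - β))
    (hc₁pos : 0 < c₁)
    (W : ℤ → ℝ) (hW : ∀ n : ℤ, W n = c₁ * α ^ n - c₂ * β ^ n)
    (m t : ℕ) (hm : 1 ≤ m) (ht : 1 ≤ t)
    (l : ℕ → ℤ) (hl : ∀ i ≤ t, 1 - (m : ℤ) ≤ l i)
    (s : ℕ → ℕ) (hs : ∃ i ≤ t, s i ≠ 0) :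
    ∃ A : ℝ, 0 < A ∧ ∃ K : ℕ, 1 ≤ K ∧ ∀ k : ℕ, K ≤ k →
      (∑ i ∈ Finset.range (t + 1), (s i : ℝ) * W ((m : ℤ) * k + l i)) ≠ 0 ∧
      |1 / (∑ i ∈ Finset.range (t + 1), (s i : ℝ) * W ((m : ℤ) * k + l i)) -
        1 / (c₁ * ∑ i ∈ Finset.range (t + 1), (s i : ℝ) * α ^ ((m : ℤ) * k + l i))| ≤
        A * |β| ^ (m * k) / α ^ (2 * m * k) := by
  obtain ⟨i0, hi0t, hi0s⟩ := hs
  have hpR : (1 : ℝ) ≤ (p : ℝ) := by exact_mod_cast hp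
  have hsq : 0 < Real.sqrt ((p : ℝ) ^ 2 + 4 * q) := Real.sqrt_pos.mpr hdisc
  -- α ≥ 1
  have hα1 : 1 ≤ α := by
    rcases le_or_gt 2 (p : ℝ) with h | h
    · rw [hα]; linarith
    · have hp1 : p = 1 := by
        have : p < 2 := by exact_mod_cast h
        omega
      have hq : 0 ≤ q := by
        by_contra hcon
        push_neg at hcon
        have : (q : ℝ) ≤ -1 := by exact_mod_cast (by omega : q ≤ -1)
        rw [hp1] at hdisc
        push_cast at hdisc
        nlinarith
      have hqR : (0 : ℝ) ≤ (q : ℝ) := by exact_mod_cast hq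
      have h1 : (1 : ℝ) ≤ (p : ℝ) ^ 2 + 4 * q := by nlinarith
      have := Real.one_le_sqrt.mpr h1
      rw [hα]; linarith
  have hαpos : 0 < α := lt_of_lt_of_le one_pos hα1
  have hαne : α ≠ 0 := ne_of_gt hαpos
  -- |β| < α
  have hβα : |β| < α := by
    rw [abs_lt]
    constructor
    · rw [hα, hβ]; linarith
    · rw [hα, hβ]; linarith
  have hβabs : (0 : ℝ) ≤ |β| := abs_nonneg β
  -- the ratio r = |β|/α
  set r : ℝ := |β| / α with hr
  have hr0 : 0 ≤ r := div_nonneg hβabs hαpos.le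
  have hr1 : r < 1 := (div_lt_one hαpos).mpr hβα
  -- positivity of exponents
  have hexp : ∀ k : ℕ, 1 ≤ k → ∀ i ≤ t, 1 ≤ (m : ℤ) * k + l i := by
    intro k hk i hi
    have h1 := hl i hi
    have h2 : (m : ℤ) ≤ (m : ℤ) * k := by
      have : (1 : ℤ) ≤ (k : ℤ) := by exact_mod_cast hk
      nlinarith [(by exact_mod_cast hm : (1:ℤ) ≤ (m:ℤ))]
    linarith
  -- the constant cP
  set cP : ℝ := α ^ (l i0) with hcP
  have hcPpos : 0 < cP := zpow_pos hαpos _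
  -- the constant D
  set D : ℝ := ∑ i ∈ Finset.range (t + 1), (s i : ℝ) * (if β = 0 then 1 else |β| ^ (l i))
    with hD
  have hDterm : ∀ i, (0 : ℝ) < (if β = 0 then 1 else |β| ^ (l i)) := by
    intro i
    split_ifs with h
    · norm_num
    · exact zpow_pos (abs_pos.mpr h) _
  have hDpos : 0 < D := by
    have h1 : (s i0 : ℝ) * (if β = 0 then 1 else |β| ^ (l i0)) ≤ D := by
      apply Finset.single_le_sum (f := fun i => (s i : ℝ) * (if β = 0 then 1 else |β| ^ (l i)))
      · intro i _
        exact mul_nonneg (Nat.cast_nonneg _) (hDterm i).le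
      · exact Finset.mem_range.mpr (by omega)
    have h2 : (1 : ℝ) ≤ (s i0 : ℝ) := by exact_mod_cast Nat.one_le_iff_ne_zero.mpr hi0s
    nlinarith [hDterm i0]
  -- notation for the sums
  set P : ℕ → ℝ := fun k => ∑ i ∈ Finset.range (t + 1), (s i : ℝ) * α ^ ((m : ℤ) * k + l i)
    with hP
  set Q : ℕ → ℝ := fun k => ∑ i ∈ Finset.range (t + 1), (s i : ℝ) * β ^ ((m : ℤ) * k + l i)
    with hQ
  set S : ℕ → ℝ := fun k => ∑ i ∈ Finset.range (t + 1), (s i : ℝ) * W ((m : ℤ) * k + l i)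
    with hS
  have hSPQ : ∀ k : ℕ, S k = c₁ * P k - c₂ * Q k := by
    intro k
    simp only [hS, hP, hQ, Finset.mul_sum, ← Finset.sum_sub_distrib]
    apply Finset.sum_congr rfl
    intro i _
    rw [hW]; ring
  -- lower bound for P
  have hPlb : ∀ k : ℕ, cP * α ^ (m * k) ≤ P k := by
    intro k
    have h1 : (s i0 : ℝ) * α ^ ((m : ℤ) * k + l i0) ≤ P k := by
      apply Finset.single_le_sum (f := fun i => (s i : ℝ) * α ^ ((m : ℤ) * k + l i))
      · intro i _
        exact mul_nonneg (Nat.cast_nonneg _) (zpow_pos hαpos _).le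
      · exact Finset.mem_range.mpr (by omega)
    have h2 : (1 : ℝ) ≤ (s i0 : ℝ) := by exact_mod_cast Nat.one_le_iff_ne_zero.mpr hi0s
    have h3 : α ^ ((m : ℤ) * k + l i0) = α ^ (m * k) * cP := by
      have hcast : ((m * k : ℕ) : ℤ) = (m : ℤ) * k := by push_cast; ring
      rw [hcP, ← zpow_natCast α (m * k), ← zpow_add₀ hαne, hcast]
    have h4 : 0 < α ^ ((m : ℤ) * k + l i0) := zpow_pos hαpos _
    nlinarith
  have hPpos : ∀ k : ℕ, 0 < P k := fun k =>
    lt_of_lt_of_le (by positivity) (hPlb k)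
  -- upper bound for |Q|
  have hQub : ∀ k : ℕ, 1 ≤ k → |Q k| ≤ D * |β| ^ (m * k) := by
    intro k hk
    calc |Q k| ≤ ∑ i ∈ Finset.range (t + 1), |(s i : ℝ) * β ^ ((m : ℤ) * k + l i)| :=
          Finset.abs_sum_le_sum_abs _ _
      _ ≤ ∑ i ∈ Finset.range (t + 1),
            (s i : ℝ) * (if β = 0 then 1 else |β| ^ (l i)) * |β| ^ (m * k) := by
          apply Finset.sum_le_sum
          intro i hi
          have habs_zpow : ∀ (x : ℝ) (n : ℤ), |x ^ n| = |x| ^ n := by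
            intro x n
            rcases n with n | n
            · simp [abs_pow]
            · simp [zpow_negSucc, abs_pow, abs_inv]
          rw [abs_mul, habs_zpow, Nat.abs_cast]
          split_ifs with h
          · have hne : (m : ℤ) * k + l i ≠ 0 := by
              have := hexp k hk i (by simpa using Finset.mem_range.mp hi |> Nat.lt_succ_iff.mp)
              omega
            rw [h, abs_zero, zero_zpow _ hne]
            simp only [abs_zero, mul_zero]
            positivity
          · rw [show (m : ℤ) * k + l i = (m * k : ℕ) + l i by push_cast; ring,
              zpow_add₀ (abs_ne_zero.mpr h), zpow_natCast]
            ring_nf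
            exact le_refl _
      _ = D * |β| ^ (m * k) := by rw [hD, Finset.sum_mul]
  -- choose K
  have hδpos : 0 < c₁ * cP / (2 * ((|c₂| + 1) * D)) := by positivity
  obtain ⟨N, hN⟩ := exists_pow_lt_of_lt_one hδpos hr1
  refine ⟨2 * (|c₂| + 1) * D / (c₁ ^ 2 * cP ^ 2), by positivity, N + 1, by omega, ?_⟩
  intro k hk
  have hk1 : 1 ≤ k := by omega
  -- key smallness estimate
  have hrk : r ^ (m * k) ≤ c₁ * cP / (2 * ((|c₂| + 1) * D)) := by
    have h1 : r ^ (m * k) ≤ r ^ N := by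
      apply pow_le_pow_of_le_one hr0 hr1.le
      calc N ≤ N + 1 := by omega
        _ ≤ k := hk
        _ = 1 * k := (one_mul k).symm
        _ ≤ m * k := Nat.mul_le_mul_right k hm
    exact h1.trans hN.le
  have hkey : (|c₂| + 1) * D * |β| ^ (m * k) ≤ c₁ * cP * α ^ (m * k) / 2 := by
    have hα2 : 0 < α ^ (m * k) := by positivity
    have h2 : r ^ (m * k) = |β| ^ (m * k) / α ^ (m * k) := div_pow _ _ _
    rw [h2] at hrk
    rw [div_le_div_iff₀ hα2 (by positivity)] at hrk
    linarith
  -- lower bound on |S k|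
  have hQk := hQub k hk1
  have hPk := hPlb k
  have hSlb : c₁ * cP * α ^ (m * k) / 2 ≤ |S k| := by
    have h1 : |c₂ * Q k| ≤ (|c₂| + 1) * D * |β| ^ (m * k) := by
      rw [abs_mul]
      have hX : 0 ≤ D * |β| ^ (m * k) := mul_nonneg hDpos.le (pow_nonneg hβabs _)
      calc |c₂| * |Q k| ≤ |c₂| * (D * |β| ^ (m * k)) :=
            mul_le_mul_of_nonneg_left hQk (abs_nonneg _)
        _ ≤ (|c₂| + 1) * (D * |β| ^ (m * k)) :=
            mul_le_mul_of_nonneg_right (by linarith [abs_nonneg c₂]) hX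
        _ = (|c₂| + 1) * D * |β| ^ (m * k) := by ring
    have h2 : c₁ * cP * α ^ (m * k) ≤ c₁ * P k := by
      have := mul_le_mul_of_nonneg_left hPk hc₁pos.le
      linarith [this]
    calc c₁ * cP * α ^ (m * k) / 2
        = c₁ * cP * α ^ (m * k) - c₁ * cP * α ^ (m * k) / 2 := by ring
      _ ≤ c₁ * P k - |c₂ * Q k| := by linarith [h1.trans hkey]
      _ ≤ |c₁ * P k| - |c₂ * Q k| := by
          have : 0 < c₁ * P k := mul_pos hc₁pos (hPpos k)
          rw [abs_of_pos this]
      _ ≤ |c₁ * P k - c₂ * Q k| := abs_sub_abs_le_abs_sub _ _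
      _ = |S k| := by rw [hSPQ k]
  have hShalf : 0 < c₁ * cP * α ^ (m * k) / 2 := by positivity
  have hSne : S k ≠ 0 := by
    intro h
    rw [h, abs_zero] at hSlb
    linarith
  refine ⟨hSne, ?_⟩
  -- rewrite the difference
  have hc₁P : c₁ * P k ≠ 0 := ne_of_gt (mul_pos hc₁pos (hPpos k))
  have hdiff : 1 / S k - 1 / (c₁ * P k) = c₂ * Q k / (S k * (c₁ * P k)) := by
    rw [div_sub_div _ _ hSne hc₁P]
    congr 1
    rw [hSPQ k]
    ring
  rw [hdiff, abs_div]
  have hden : |S k * (c₁ * P k)| = |S k| * (c₁ * P k) := by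
    rw [abs_mul, abs_of_pos (mul_pos hc₁pos (hPpos k))]
  rw [hden]
  have hnum : |c₂ * Q k| ≤ (|c₂| + 1) * D * |β| ^ (m * k) := by
    rw [abs_mul]
    have hX : 0 ≤ D * |β| ^ (m * k) := mul_nonneg hDpos.le (pow_nonneg hβabs _)
    calc |c₂| * |Q k| ≤ |c₂| * (D * |β| ^ (m * k)) :=
          mul_le_mul_of_nonneg_left hQk (abs_nonneg _)
      _ ≤ (|c₂| + 1) * (D * |β| ^ (m * k)) :=
          mul_le_mul_of_nonneg_right (by linarith [abs_nonneg c₂]) hX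
      _ = (|c₂| + 1) * D * |β| ^ (m * k) := by ring
  have hdenlb : c₁ * cP * α ^ (m * k) / 2 * (c₁ * cP * α ^ (m * k)) ≤ |S k| * (c₁ * P k) := by
    apply mul_le_mul hSlb _ (by positivity) (abs_nonneg _)
    have := mul_le_mul_of_nonneg_left hPk hc₁pos.le
    linarith
  calc |c₂ * Q k| / (|S k| * (c₁ * P k))
      ≤ (|c₂| + 1) * D * |β| ^ (m * k) /
          (c₁ * cP * α ^ (m * k) / 2 * (c₁ * cP * α ^ (m * k))) :=
        div_le_div₀ (by positivity) hnum (by positivity) hdenlb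
    _ = 2 * (|c₂| + 1) * D / (c₁ ^ 2 * cP ^ 2) * |β| ^ (m * k) / α ^ (2 * m * k) := by
        rw [show 2 * m * k = m * k + m * k by ring, pow_add]
        field_simp
end

section
/- Let p ≥ 1 and q be integers with p² + 4q > 0 and p² + 2q − 2 < p·√(p² + 4q), set α = (p + √(p² + 4q))/2, β = (p − √(p² + 4q))/2, let a, b be integers with c₁ = (b − aβ)/(α − β) > 0, and define Wₙ = c₁αⁿ − c₂βⁿ where c₂ = (b − aα)/(α − β). Let m, t ≥ 1 be integers, let l₀, …, l_t be integers with lᵢ ≥ 1 − m for all i, and let s₀, …, s_t be natural numbers, not all zero. Then lim_{n→∞} [ (Σ_{k=n}^{∞} 1/(Σ_{i=0}^{t} sᵢ·W_{mk+lᵢ}))^{−1} − Σ_{i=0}^{t} sᵢ·(W_{mn+lᵢ} − W_{m(n−1)+lᵢ}) ] = 0. -/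
open Filter

lemma geo_shift_summable (x : ℝ) (h0 : 0 ≤ x) (h1 : x < 1) (n : ℕ) :
    Summable (fun k : ℕ => x ^ (n + k)) := by
  simpa [pow_add] using (summable_geometric_of_lt_one h0 h1).mul_left (x ^ n)

lemma geo_shift_tsum (x : ℝ) (h0 : 0 ≤ x) (h1 : x < 1) (n : ℕ) :
    ∑' k : ℕ, x ^ (n + k) = x ^ n * (1 - x)⁻¹ := by
  simp [pow_add, tsum_mul_left, tsum_geometric_of_lt_one h0 h1]

set_option maxHeartbeats 2000000 in
lemma aux_tail (A : ℕ → ℝ) (C K a r : ℝ) (hC : 0 < C) (ha : 1 < a)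
    (hr0 : 0 < r) (hr1 : r < 1) (hK : 0 < K)
    (hbound : ∀ n : ℕ, 1 ≤ n → |A n - C * a ^ n| ≤ K * r ^ n) :
    Tendsto (fun n : ℕ => (∑' k : ℕ, 1 / A (n + k))⁻¹ - (A n - A (n - 1)))
      atTop (nhds 0) := by
  have ha0 : (0:ℝ) < a := lt_trans one_pos ha
  have hainv1 : a⁻¹ < 1 := by rw [inv_lt_one_iff₀]; right; exact ha
  have hainv0 : (0:ℝ) < a⁻¹ := by positivity
  have hra1 : r / a < 1 := by rw [div_lt_one ha0]; exact lt_trans hr1 ha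
  have hra0 : (0:ℝ) < r / a := div_pos hr0 ha0
  obtain ⟨ρ, hρdef⟩ : ∃ x : ℝ, x = r / (a * a) := ⟨_, rfl⟩
  have hρ0 : 0 < ρ := by rw [hρdef]; positivity
  have hρ1 : ρ < 1 := by
    rw [hρdef, div_lt_one (by positivity)]; nlinarith
  obtain ⟨c, hcdef⟩ : ∃ x : ℝ, x = C * (1 - a⁻¹) := ⟨_, rfl⟩
  have hc : 0 < c := by
    have h1 : 0 < 1 - a⁻¹ := by linarith
    rw [hcdef]; positivity
  obtain ⟨K₂, hK₂def⟩ : ∃ x : ℝ, x = K * (1 + r⁻¹) := ⟨_, rfl⟩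
  have hK₂0 : 0 < K₂ := by rw [hK₂def]; positivity
  obtain ⟨K₃, hK₃def⟩ : ∃ x : ℝ, x = (2*K/(C*C)) * (1-ρ)⁻¹ := ⟨_, rfl⟩
  have hK₃0 : 0 < K₃ := by
    have h1 : 0 < 1 - ρ := by linarith
    rw [hK₃def]; positivity
  obtain ⟨M, hMdef⟩ : ∃ x : ℝ, x = (K₂/c + c*K₃ + K₂*K₃) * (C+K) := ⟨_, rfl⟩
  -- choose N
  have htend : Tendsto (fun n : ℕ => K * (r/a)^n) atTop (nhds 0) := by
    simpa using (tendsto_pow_atTop_nhds_zero_of_lt_one hra0.le hra1).const_mul K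
  obtain ⟨N₀, hN₀⟩ := (eventually_atTop.mp (htend.eventually (gt_mem_nhds (half_pos hC))))
  obtain ⟨N, hNdef⟩ : ∃ x : ℕ, x = max N₀ 2 := ⟨_, rfl⟩
  have hN2 : 2 ≤ N := hNdef ▸ le_max_right _ _
  have hAlow : ∀ j, N ≤ j → C/2 * a^j ≤ A j := by
    intro j hj
    have hb := (abs_le.mp (hbound j (by omega))).1
    have h1 : K * (r/a)^j < C/2 := hN₀ j (le_trans (hNdef ▸ le_max_left _ _) hj)
    have h2 : K * r^j < C/2 * a^j := by
      have h3 : K * (r/a)^j * a^j < C/2 * a^j :=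
        mul_lt_mul_of_pos_right h1 (by positivity)
      calc K * r^j = K * (r/a)^j * a^j := by
            rw [div_pow]; field_simp
        _ < C/2 * a^j := h3
    linarith
  have hApos : ∀ j, N ≤ j → 0 < A j := fun j hj =>
    lt_of_lt_of_le (by positivity) (hAlow j hj)
  have hAup : ∀ j, N ≤ j → A j ≤ (C + K) * a^j := by
    intro j hj
    have hb := (abs_le.mp (hbound j (by omega))).2
    have hra : r^j ≤ a^j := pow_le_pow_left₀ hr0.le (le_trans hr1.le ha.le) j
    nlinarith
  -- the eventual bound
  have key : ∀ n, N ≤ n → |(∑' k : ℕ, 1 / A (n + k))⁻¹ - (A n - A (n - 1))| ≤ M * r^n := by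
    intro n hn
    obtain ⟨T, hTdef⟩ : ∃ x : ℝ, x = ∑' k : ℕ, 1 / A (n + k) := ⟨_, rfl⟩
    obtain ⟨B, hBdef⟩ : ∃ x : ℝ, x = A n - A (n - 1) := ⟨_, rfl⟩
    rw [← hTdef, ← hBdef]
    -- summability
    have hfle : ∀ k : ℕ, 1 / A (n + k) ≤ (2/C) * (a⁻¹)^(n+k) := by
      intro k
      have hlow := hAlow (n+k) (by omega)
      calc 1 / A (n+k) ≤ 1 / (C/2 * a^(n+k)) :=
            one_div_le_one_div_of_le (by positivity) hlow
        _ = (2/C) * (a⁻¹)^(n+k) := by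
            rw [inv_pow]; field_simp
    have hfnonneg : ∀ k : ℕ, 0 ≤ 1 / A (n + k) := fun k =>
      le_of_lt (one_div_pos.mpr (hApos (n+k) (by omega)))
    have hsumf : Summable (fun k : ℕ => 1 / A (n + k)) :=
      Summable.of_nonneg_of_le hfnonneg hfle
        ((geo_shift_summable a⁻¹ hainv0.le hainv1 n).mul_left (2/C))
    have hsumg : Summable (fun k : ℕ => 1 / (C * a^(n+k))) := by
      have := (geo_shift_summable a⁻¹ hainv0.le hainv1 n).mul_left (1/C)
      refine this.congr ?_
      intro k; rw [inv_pow]; field_simp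
    obtain ⟨G, hGdef⟩ : ∃ x : ℝ, x = (a⁻¹)^n / c := ⟨_, rfl⟩
    have hGval : ∑' k : ℕ, 1 / (C * a^(n+k)) = G := by
      have h1 : (fun k : ℕ => 1 / (C * a^(n+k))) = fun k : ℕ => (1/C) * (a⁻¹)^(n+k) := by
        funext k; rw [inv_pow]; field_simp
      rw [h1, tsum_mul_left, geo_shift_tsum a⁻¹ hainv0.le hainv1 n]
      rw [hGdef, hcdef]; field_simp
    -- |T - G| ≤ K₃ ρ^n
    have hTG : |T - G| ≤ K₃ * ρ^n := by
      rw [← hGval, hTdef, ← Summable.tsum_sub hsumf hsumg]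
      have hterm : ∀ k : ℕ, |1 / A (n+k) - 1 / (C * a^(n+k))| ≤ (2*K/(C*C)) * ρ^(n+k) := by
        intro k
        have hjN : N ≤ n + k := by omega
        have hAj := hApos (n+k) hjN
        have hAjlow := hAlow (n+k) hjN
        have hb := hbound (n+k) (by omega)
        have h1 : 1 / A (n+k) - 1 / (C * a^(n+k)) =
            (C * a^(n+k) - A (n+k)) / (A (n+k) * (C * a^(n+k))) := by
          field_simp
        rw [h1, abs_div, abs_of_pos (mul_pos hAj (by positivity))]
        have habs : |C * a^(n+k) - A (n+k)| ≤ K * r^(n+k) := by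
          rw [abs_sub_comm]; exact hb
        calc |C * a^(n+k) - A (n+k)| / (A (n+k) * (C * a^(n+k)))
            ≤ (K * r^(n+k)) / ((C/2 * a^(n+k)) * (C * a^(n+k))) := by
              apply div_le_div₀ (by positivity) habs (by positivity)
              apply mul_le_mul_of_nonneg_right hAjlow (by positivity)
          _ = (2*K/(C*C)) * ρ^(n+k) := by
              rw [hρdef, div_pow, mul_pow]
              field_simp
      have hsbd : Summable (fun k : ℕ => (2*K/(C*C)) * ρ^(n+k)) :=
        (geo_shift_summable ρ hρ0.le hρ1 n).mul_left _
      calc |∑' k : ℕ, (1 / A (n+k) - 1 / (C * a^(n+k)))|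
          ≤ ∑' k : ℕ, |1 / A (n+k) - 1 / (C * a^(n+k))| := by
            have hsabs : Summable (fun k : ℕ => ‖1 / A (n+k) - 1 / (C * a^(n+k))‖) := by
              simp only [Real.norm_eq_abs]
              exact Summable.of_nonneg_of_le (fun k => abs_nonneg _) hterm hsbd
            simpa [Real.norm_eq_abs] using norm_tsum_le_tsum_norm hsabs
        _ ≤ ∑' k : ℕ, (2*K/(C*C)) * ρ^(n+k) := by
            apply Summable.tsum_le_tsum hterm
            · exact Summable.of_nonneg_of_le (fun k => abs_nonneg _) hterm hsbd
            · exact hsbd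
        _ = K₃ * ρ^n := by
            rw [tsum_mul_left, geo_shift_tsum ρ hρ0.le hρ1 n, hK₃def]; ring
    -- lower bound for T
    have hT0 : 1 / A n ≤ T := by
      have h := Summable.le_tsum hsumf 0 (fun k _ => hfnonneg k)
      rw [hTdef]
      simpa only [Nat.add_zero] using h
    have hTpos : 0 < T := lt_of_lt_of_le (one_div_pos.mpr (hApos n hn)) hT0
    have hTinv : T⁻¹ ≤ (C + K) * a^n := by
      have h1 : 1 / ((C+K) * a^n) ≤ T :=
        le_trans (one_div_le_one_div_of_le (hApos n hn) (hAup n hn)) hT0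
      calc T⁻¹ ≤ (1 / ((C+K) * a^n))⁻¹ := inv_anti₀ (by positivity) h1
        _ = (C+K) * a^n := by rw [one_div, inv_inv]
    -- B estimate
    have hB : |B - c * a^n| ≤ K₂ * r^n := by
      obtain ⟨j, rfl⟩ : ∃ j, n = j + 1 := ⟨n - 1, by omega⟩
      have h1 := hbound (j+1) (by omega)
      have h2 := hbound j (by omega)
      have hca : c * a^(j+1) = C * a^(j+1) - C * a^j := by
        rw [hcdef, pow_succ]; field_simp
      have hBeq : B - c * a^(j+1) = (A (j+1) - C * a^(j+1)) - (A j - C * a^j) := by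
        rw [hBdef, hca]; simp; ring
      rw [hBeq]
      have hr' : r^j = r^(j+1) * r⁻¹ := by rw [pow_succ]; field_simp
      calc |(A (j+1) - C * a^(j+1)) - (A j - C * a^j)|
          ≤ |A (j+1) - C * a^(j+1)| + |A j - C * a^j| := abs_sub _ _
        _ ≤ K * r^(j+1) + K * r^j := add_le_add h1 h2
        _ = K₂ * r^(j+1) := by rw [hK₂def, hr']; ring
    have hBub : |B| ≤ c * a^n + K₂ * r^n := by
      have h1 := abs_le.mp hB
      have h0 : 0 < c * a^n := by positivity
      rw [abs_le]; constructor <;> linarith [h1.1, h1.2, h0]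
    -- 1 = c * a^n * G
    have hpow1 : a^n * (a⁻¹)^n = 1 := by
      rw [← mul_pow, mul_inv_cancel₀ ha0.ne', one_pow]
    have hone : c * a^n * G = 1 := by
      have h6 : (a:ℝ)^n ≠ 0 := by positivity
      rw [hGdef, inv_pow]
      field_simp
    -- |1 - B*T| bound
    have hkey : |1 - B * T| ≤ (K₂/c + c*K₃ + K₂*K₃) * (r/a)^n := by
      have hsplit : 1 - B * T = (c * a^n - B) * G + B * (G - T) := by
        rw [← hone]; ring
      rw [hsplit]
      have hGpos : 0 < G := by rw [hGdef]; positivity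
      have e1 : |(c * a^n - B) * G| ≤ (K₂ * r^n) * G := by
        rw [abs_mul, abs_of_pos hGpos, abs_sub_comm]
        exact mul_le_mul_of_nonneg_right hB hGpos.le
      have e2 : |B * (G - T)| ≤ (c * a^n + K₂ * r^n) * (K₃ * ρ^n) := by
        rw [abs_mul, abs_sub_comm G T]
        apply mul_le_mul hBub hTG (abs_nonneg _)
        positivity
      have base0 : (r/a)^n = r^n * (a⁻¹)^n := by
        rw [div_pow, div_eq_mul_inv, inv_pow]
      have base1 : (K₂ * r^n) * G = (K₂/c) * (r/a)^n := by
        rw [hGdef, base0]; field_simp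
      have base2 : a^n * ρ^n = (r/a)^n := by
        rw [← mul_pow]; congr 1; rw [hρdef]; field_simp
      have base3 : r^n * ρ^n ≤ (r/a)^n := by
        have h1 : r^n ≤ a^n := pow_le_pow_left₀ hr0.le (le_trans hr1.le ha.le) n
        calc r^n * ρ^n ≤ a^n * ρ^n := mul_le_mul_of_nonneg_right h1 (by positivity)
          _ = (r/a)^n := base2
      calc |(c * a^n - B) * G + B * (G - T)|
          ≤ |(c * a^n - B) * G| + |B * (G - T)| := abs_add_le _ _
        _ ≤ (K₂ * r^n) * G + (c * a^n + K₂ * r^n) * (K₃ * ρ^n) := add_le_add e1 e2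
        _ = (K₂/c) * (r/a)^n + c * K₃ * (a^n * ρ^n) + K₂ * K₃ * (r^n * ρ^n) := by
            rw [base1]; ring
        _ ≤ (K₂/c) * (r/a)^n + c * K₃ * (r/a)^n + K₂ * K₃ * (r/a)^n := by
            have h4 := mul_le_mul_of_nonneg_left base3 (by positivity : (0:ℝ) ≤ K₂ * K₃)
            rw [base2]
            linarith
        _ = (K₂/c + c*K₃ + K₂*K₃) * (r/a)^n := by ring
    -- conclude
    have hfinal : T⁻¹ - B = (1 - B * T) * T⁻¹ := by
      rw [sub_mul, one_mul, mul_assoc, mul_inv_cancel₀ hTpos.ne', mul_one]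
    rw [hfinal, abs_mul, abs_of_pos (inv_pos.mpr hTpos)]
    calc |1 - B * T| * T⁻¹ ≤ ((K₂/c + c*K₃ + K₂*K₃) * (r/a)^n) * ((C+K) * a^n) := by
          apply mul_le_mul hkey hTinv (by positivity) (by positivity)
      _ = M * r^n := by
          have hra_pow : (r/a)^n * a^n = r^n := by
            rw [← mul_pow, div_mul_cancel₀ _ ha0.ne', ]
          rw [hMdef, ← hra_pow]; ring
  -- squeeze
  apply squeeze_zero_norm' (a := fun n => M * r^n)
  · filter_upwards [eventually_ge_atTop N] with n hn
    simpa [Real.norm_eq_abs] using key n hn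
  · simpa using (tendsto_pow_atTop_nhds_zero_of_lt_one hr0.le hr1).const_mul M


set_option maxHeartbeats 2000000 in
/-- Theorem 3.1: the inverse of the tail sum `Σ_{k=n}^∞ 1/(Σᵢ sᵢ·W_{mk+lᵢ})` is
asymptotically `Σᵢ sᵢ·(W_{mn+lᵢ} − W_{m(n−1)+lᵢ})`. -/
theorem inverse_tail_sum_asymptotic (p q a b : ℤ) (α β c₁ c₂ : ℝ)
    (hp : 1 ≤ p)
    (hdisc : 0 < (p : ℝ) ^ 2 + 4 * q)
    (hcond : (p : ℝ) ^ 2 + 2 * q - 2 < p * Real.sqrt ((p : ℝ) ^ 2 + 4 * q))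
    (hα : α = ((p : ℝ) + Real.sqrt ((p : ℝ) ^ 2 + 4 * q)) / 2)
    (hβ : β = ((p : ℝ) - Real.sqrt ((p : ℝ) ^ 2 + 4 * q)) / 2)
    (hc₁ : c₁ = ((b : ℝ) - a * β) / (α - β))
    (hc₂ : c₂ = ((b : ℝ) - a * α) / (α - β))
    (hc₁pos : 0 < c₁)
    (W : ℤ → ℝ) (hW : ∀ n : ℤ, W n = c₁ * α ^ n - c₂ * β ^ n)
    (m t : ℕ) (hm : 1 ≤ m) (ht : 1 ≤ t)
    (l : ℕ → ℤ) (hl : ∀ i ≤ t, 1 - (m : ℤ) ≤ l i)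
    (s : ℕ → ℕ) (hs : ∃ i ≤ t, s i ≠ 0) :
    Tendsto (fun n : ℕ =>
      (∑' k : ℕ,
        1 / (∑ i ∈ Finset.range (t + 1), (s i : ℝ) * W ((m : ℤ) * (n + k) + l i)))⁻¹ -
      ∑ i ∈ Finset.range (t + 1),
        (s i : ℝ) * (W ((m : ℤ) * n + l i) - W ((m : ℤ) * ((n : ℤ) - 1) + l i)))
      atTop (nhds 0) := by
  have hp1 : (1:ℝ) ≤ (p:ℝ) := by exact_mod_cast hp
  have hDpos : 0 < Real.sqrt ((p:ℝ)^2 + 4*q) := Real.sqrt_pos.mpr hdisc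
  have hDsq : Real.sqrt ((p:ℝ)^2 + 4*q) ^ 2 = (p:ℝ)^2 + 4*q := Real.sq_sqrt hdisc.le
  have hβ2 : β^2 < 1 := by rw [hβ]; nlinarith
  have hβlt1 : β < 1 := by nlinarith [sq_nonneg (β-1)]
  have hβgt : -1 < β := by nlinarith [sq_nonneg (β+1)]
  have hβabs : |β| < 1 := abs_lt.mpr ⟨hβgt, hβlt1⟩
  have hαpos : 0 < α := by rw [hα]; nlinarith
  have hαne : α ≠ 0 := ne_of_gt hαpos
  have hprod : α * β = -(q:ℝ) := by
    rw [hα, hβ]; linear_combination (-(1:ℝ)/4) * hDsq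
  have hm1 : (1:ℤ) ≤ (m:ℤ) := by exact_mod_cast hm
  by_cases hdeg : q = 0 ∧ p = 1
  · -- degenerate case: α = 1, β = 0
    obtain ⟨hq0, hp1'⟩ := hdeg
    have hD1 : Real.sqrt ((p:ℝ)^2 + 4*q) = 1 := by
      rw [hq0, hp1']; norm_num
    have hα1 : α = 1 := by rw [hα, hD1, hp1']; norm_num
    have hβ0 : β = 0 := by rw [hβ, hD1, hp1']; norm_num
    have hWc : ∀ e : ℤ, 1 ≤ e → W e = c₁ := by
      intro e he
      rw [hW, hα1, hβ0, one_zpow, zero_zpow e (by omega), mul_zero, sub_zero, mul_one]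
    have hS : 0 < ∑ i ∈ Finset.range (t+1), (s i : ℝ) := by
      obtain ⟨i₀, hi₀, hsi⟩ := hs
      refine Finset.sum_pos' (fun i _ => by positivity) ⟨i₀, Finset.mem_range_succ_iff.mpr hi₀, ?_⟩
      have : 0 < s i₀ := Nat.pos_of_ne_zero hsi
      exact_mod_cast this
    refine Tendsto.congr' ?_ (tendsto_const_nhds (x := (0:ℝ)))
    filter_upwards [eventually_ge_atTop 2] with n hn
    have hsum2 : ∑ i ∈ Finset.range (t+1),
        (s i : ℝ) * (W ((m:ℤ)*n + l i) - W ((m:ℤ)*((n:ℤ)-1) + l i)) = 0 := by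
      apply Finset.sum_eq_zero
      intro i hi
      have hli := hl i (Finset.mem_range_succ_iff.mp hi)
      have hn2 : (2:ℤ) ≤ (n:ℤ) := by exact_mod_cast hn
      have h1 : W ((m:ℤ)*n + l i) = c₁ := hWc _ (by nlinarith)
      have h2 : W ((m:ℤ)*((n:ℤ)-1) + l i) = c₁ := hWc _ (by nlinarith)
      rw [h1, h2, sub_self, mul_zero]
    have htsum : (∑' k : ℕ,
        1 / (∑ i ∈ Finset.range (t+1), (s i : ℝ) * W ((m:ℤ)*(↑n+↑k) + l i))) = 0 := by
      have hconst : ∀ k : ℕ, (∑ i ∈ Finset.range (t+1), (s i : ℝ) * W ((m:ℤ)*(↑n+↑k) + l i))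
          = (∑ i ∈ Finset.range (t+1), (s i : ℝ)) * c₁ := by
        intro k
        rw [Finset.sum_mul]
        apply Finset.sum_congr rfl
        intro i hi
        have hli := hl i (Finset.mem_range_succ_iff.mp hi)
        have hn2 : (2:ℤ) ≤ (n:ℤ) := by exact_mod_cast hn
        have hk0 : (0:ℤ) ≤ (k:ℤ) := by positivity
        rw [hWc _ (by nlinarith)]
      rw [tsum_congr (fun k => by rw [hconst k])]
      apply tsum_eq_zero_of_not_summable
      intro hsummable
      have h0 := hsummable.tendsto_atTop_zero
      have huniq : (0:ℝ) = 1 / ((∑ i ∈ Finset.range (t+1), (s i : ℝ)) * c₁) :=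
        tendsto_nhds_unique h0 tendsto_const_nhds
      have hpos : 0 < (∑ i ∈ Finset.range (t+1), (s i : ℝ)) * c₁ := mul_pos hS hc₁pos
      have : 0 < 1 / ((∑ i ∈ Finset.range (t+1), (s i : ℝ)) * c₁) := by positivity
      linarith [huniq]
    rw [htsum, hsum2]
    norm_num
  · -- main case: 1 < α
    have hα1 : 1 < α := by
      by_cases hq : q = 0
      · have hp2 : 2 ≤ p := by
          rcases lt_or_ge p 2 with h | h
          · exfalso; exact hdeg ⟨hq, by omega⟩
          · exact h
        have hD : Real.sqrt ((p:ℝ)^2 + 4*q) = p := by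
          rw [hq]
          push_cast
          rw [mul_zero, add_zero, Real.sqrt_sq (by linarith)]
        rw [hα, hD]
        have : (2:ℝ) ≤ p := by exact_mod_cast hp2
        linarith
      · have h1 : (1:ℝ) ≤ |(q:ℝ)| := by
          have : (1:ℤ) ≤ |q| := Int.one_le_abs (by omega)
          calc (1:ℝ) ≤ ((|q| : ℤ) : ℝ) := by exact_mod_cast this
            _ = |(q:ℝ)| := by push_cast; rfl
        have h2 : α * |β| = |(q:ℝ)| := by
          rw [← abs_of_pos hαpos, ← abs_mul, hprod, abs_neg]
        have h3 : 0 < α * (1 - |β|) := by nlinarith [abs_nonneg β]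
        nlinarith
    -- setup
    obtain ⟨r, hrdef⟩ : ∃ x:ℝ, x = max |β| (1/2) := ⟨_, rfl⟩
    have hr0 : 0 < r := by
      rw [hrdef]; exact lt_of_lt_of_le one_half_pos (le_max_right _ _)
    have hr1 : r < 1 := by rw [hrdef]; exact max_lt hβabs (by norm_num)
    have hβr : |β| ≤ r := hrdef ▸ le_max_left _ _
    obtain ⟨A, hAdef⟩ : ∃ A : ℕ → ℝ,
        A = fun j : ℕ => ∑ i ∈ Finset.range (t+1), (s i : ℝ) * W ((m:ℤ)*j + l i) := ⟨_, rfl⟩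
    obtain ⟨C, hCdef⟩ : ∃ x:ℝ, x = c₁ * ∑ i ∈ Finset.range (t+1), (s i : ℝ) * α ^ (l i) :=
      ⟨_, rfl⟩
    have hCpos : 0 < C := by
      rw [hCdef]
      apply mul_pos hc₁pos
      obtain ⟨i₀, hi₀, hsi⟩ := hs
      refine Finset.sum_pos' (fun i _ => by positivity) ⟨i₀, Finset.mem_range_succ_iff.mpr hi₀, ?_⟩
      have h1 : 0 < (s i₀ : ℝ) := by exact_mod_cast Nat.pos_of_ne_zero hsi
      exact mul_pos h1 (zpow_pos hαpos _)
    obtain ⟨K, hKdef⟩ : ∃ x:ℝ,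
        x = |c₂| * (∑ i ∈ Finset.range (t+1), (s i : ℝ)) * r ^ (1-(m:ℤ)) + 1 := ⟨_, rfl⟩
    have hK0 : 0 < K := by
      rw [hKdef]
      have h1 : (0:ℝ) ≤ |c₂| * (∑ i ∈ Finset.range (t+1), (s i : ℝ)) * r ^ (1-(m:ℤ)) := by
        apply mul_nonneg (mul_nonneg (abs_nonneg _) ?_) (zpow_pos hr0 _).le
        exact Finset.sum_nonneg (fun i _ => by positivity)
      linarith
    have hpow_id : ∀ (x : ℝ) (j : ℕ), x ≠ 0 → (x^m)^j = x ^ ((m:ℤ)*j) := by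
      intro x j hx
      rw [← pow_mul, ← zpow_natCast]
      push_cast
      ring_nf
    have hbound : ∀ j : ℕ, 1 ≤ j → |A j - C * (α^m)^j| ≤ K * (r^m)^j := by
      intro j hj
      have hmj : (m:ℤ) ≤ (m:ℤ) * j := le_mul_of_one_le_right (by positivity) (by exact_mod_cast hj)
      have hdiff : A j - C * (α^m)^j =
          ∑ i ∈ Finset.range (t+1), (s i:ℝ) * (-c₂ * β ^ ((m:ℤ)*j + l i)) := by
        rw [congrFun hAdef j, hCdef, hpow_id α j hαne, Finset.mul_sum, Finset.sum_mul,
          ← Finset.sum_sub_distrib]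
        apply Finset.sum_congr rfl
        intro i hi
        rw [hW ((m:ℤ)*j + l i), zpow_add₀ hαne]
        ring
      rw [hdiff]
      have hKb : ∀ i ∈ Finset.range (t+1), |(s i:ℝ) * (-c₂ * β ^ ((m:ℤ)*j + l i))| ≤
          (s i:ℝ) * (|c₂| * (r ^ ((m:ℤ)*j) * r ^ (1-(m:ℤ)))) := by
        intro i hi
        have hli := hl i (Finset.mem_range_succ_iff.mp hi)
        have he1 : (1:ℤ) ≤ (m:ℤ)*j + l i := by linarith
        obtain ⟨eN, heN⟩ : ∃ eN:ℕ, ((m:ℤ)*j + l i) = (eN:ℤ) :=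
          ⟨((m:ℤ)*j + l i).toNat, (Int.toNat_of_nonneg (by linarith)).symm⟩
        rw [abs_mul, abs_mul, abs_neg, Nat.abs_cast]
        apply mul_le_mul_of_nonneg_left _ (by positivity)
        apply mul_le_mul_of_nonneg_left _ (abs_nonneg c₂)
        calc |β ^ ((m:ℤ)*j + l i)| = |β| ^ eN := by rw [heN, zpow_natCast, abs_pow]
          _ ≤ r ^ eN := pow_le_pow_left₀ (abs_nonneg β) hβr eN
          _ = r ^ ((m:ℤ)*j + l i) := by rw [heN, zpow_natCast]
          _ = r ^ ((m:ℤ)*j) * r ^ (l i) := zpow_add₀ hr0.ne' _ _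
          _ ≤ r ^ ((m:ℤ)*j) * r ^ (1-(m:ℤ)) := by
              apply mul_le_mul_of_nonneg_left
                (zpow_le_zpow_right_of_le_one₀ hr0 hr1.le hli) (zpow_pos hr0 _).le
      calc |∑ i ∈ Finset.range (t+1), (s i:ℝ) * (-c₂ * β ^ ((m:ℤ)*j + l i))|
          ≤ ∑ i ∈ Finset.range (t+1), |(s i:ℝ) * (-c₂ * β ^ ((m:ℤ)*j + l i))| :=
            Finset.abs_sum_le_sum_abs _ _
        _ ≤ ∑ i ∈ Finset.range (t+1), (s i:ℝ) * (|c₂| * (r ^ ((m:ℤ)*j) * r ^ (1-(m:ℤ)))) :=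
            Finset.sum_le_sum hKb
        _ = (|c₂| * (∑ i ∈ Finset.range (t+1), (s i:ℝ)) * r ^ (1-(m:ℤ))) * r ^ ((m:ℤ)*j) := by
            rw [← Finset.sum_mul]; ring
        _ ≤ K * (r^m)^j := by
            rw [hKdef, hpow_id r j hr0.ne']
            have h1 : 0 < r ^ ((m:ℤ)*j) := zpow_pos hr0 _
            have h2 : (0:ℝ) ≤ |c₂| * (∑ i ∈ Finset.range (t+1), (s i : ℝ)) * r ^ (1-(m:ℤ)) := by
              apply mul_nonneg (mul_nonneg (abs_nonneg _) ?_) (zpow_pos hr0 _).le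
              exact Finset.sum_nonneg (fun i _ => by positivity)
            nlinarith
    have main := aux_tail A C K (α^m) (r^m) hCpos
      (one_lt_pow₀ hα1 (by omega)) (pow_pos hr0 m) (pow_lt_one₀ hr0.le hr1 (by omega)) hK0 hbound
    refine Tendsto.congr' ?_ main
    filter_upwards [eventually_ge_atTop 1] with n hn
    have h1 : (∑' k:ℕ, 1/A (n+k)) = ∑' k:ℕ,
        1/(∑ i ∈ Finset.range (t+1), (s i:ℝ) * W ((m:ℤ)*(↑n+↑k) + l i)) := by
      apply tsum_congr
      intro k
      have hc : ((n+k:ℕ):ℤ) = (n:ℤ)+(k:ℤ) := by push_cast; ring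
      rw [congrFun hAdef (n+k), hc]
    have h2 : A n - A (n-1) = ∑ i ∈ Finset.range (t+1),
        (s i:ℝ) * (W ((m:ℤ)*n + l i) - W ((m:ℤ)*((n:ℤ)-1) + l i)) := by
      rw [congrFun hAdef n, congrFun hAdef (n-1), ← Finset.sum_sub_distrib]
      apply Finset.sum_congr rfl
      intro i hi
      have hc : ((n-1:ℕ):ℤ) = (n:ℤ)-1 := by omega
      rw [hc]
      ring
    rw [h1, h2]
end

section
/- Let p ≥ 1 and q be integers with p² + 4q > 0 and p² + 2q − 2 < p·√(p² + 4q), set α = (p + √(p² + 4q))/2, β = (p − √(p² + 4q))/2, let a, b be integers with c₁ = (b − aβ)/(α − β) > 0, and define Wₙ = c₁αⁿ − c₂βⁿ where c₂ = (b − aα)/(α − β). Let m ≥ 1 and s₀ ≥ 1 be integers and let l₀ be an integer with l₀ ≥ 1 − m. Then lim_{n→∞} [ (Σ_{k=n}^{∞} 1/(s₀·W_{mk+l₀}))^{−1} − (s₀·W_{mn+l₀} − s₀·W_{m(n−1)+l₀}) ] = 0. -/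
open Filter

lemma abs_inv_sub_inv_le {x y d : ℝ} (hx : 0 < x) (hy : 0 < y) (hd : |y - x| ≤ d) :
    |x⁻¹ - y⁻¹| ≤ d / (x * y) := by
  have hxy : 0 < x * y := mul_pos hx hy
  have h : x⁻¹ - y⁻¹ = (y - x) / (x * y) := by field_simp
  rw [h, abs_div, abs_of_pos hxy]
  gcongr

lemma shift_geom_eq (B r : ℝ) (n : ℕ) :
    (fun k : ℕ => (B * r ^ (n + k))⁻¹) = fun k => (B⁻¹ * (r⁻¹) ^ n) * (r⁻¹) ^ k := by
  funext k
  rw [pow_add, mul_inv, mul_inv, inv_pow, inv_pow]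
  ring

lemma summable_shift_geom (B r : ℝ) (hr : 1 < r) (n : ℕ) :
    Summable (fun k : ℕ => (B * r ^ (n + k))⁻¹) := by
  rw [shift_geom_eq]
  exact (summable_geometric_of_lt_one (by positivity) (inv_lt_one_of_one_lt₀ hr)).mul_left _

lemma tsum_shift_geom (B r : ℝ) (hB : 0 < B) (hr : 1 < r) (n : ℕ) :
    ∑' k : ℕ, (B * r ^ (n + k))⁻¹ = (B * r ^ n * (r - 1) / r)⁻¹ := by
  have hr0 : (0:ℝ) < r := lt_trans one_pos hr
  rw [shift_geom_eq, tsum_mul_left,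
    tsum_geometric_of_lt_one (by positivity) (inv_lt_one_of_one_lt₀ hr)]
  have h1 : r - 1 ≠ 0 := by linarith
  have h2 : (r:ℝ) ^ n ≠ 0 := by positivity
  field_simp
  rw [div_pow, one_pow, one_div, inv_mul_cancel₀ h2]

lemma core_tendsto (A r C ρ : ℝ) (hA : 0 < A) (hr : 1 < r)
    (hC : 0 ≤ C) (hρ0 : 0 ≤ ρ) (hρ1 : ρ < 1)
    (g e : ℕ → ℝ) (hge : ∀ j, g j = A * r ^ j + e j)
    (hbd : ∀ j, 1 ≤ j → |e j| ≤ C * ρ ^ j) :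
    Tendsto (fun n : ℕ => (∑' k : ℕ, (g (n + k))⁻¹)⁻¹ - A * r ^ n * (r - 1) / r)
      atTop (nhds 0) := by
  have hr0 : (0:ℝ) < r := lt_trans one_pos hr
  set σ : ℝ := ρ / r ^ 2 with hσdef
  have hσ0 : 0 ≤ σ := by positivity
  have hσ1 : σ < 1 := by
    rw [div_lt_one (by positivity)]
    nlinarith
  have hσr : σ * r ^ 2 = ρ := by
    rw [hσdef]; exact div_mul_cancel₀ ρ (by positivity)
  -- find K
  have hgeo : Tendsto (fun j : ℕ => C * (ρ / r) ^ j) atTop (nhds 0) := by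
    simpa using (tendsto_pow_atTop_nhds_zero_of_lt_one (by positivity)
      ((div_lt_one hr0).2 (lt_trans hρ1 hr))).const_mul C
  have hev : ∀ᶠ j : ℕ in atTop, C * (ρ / r) ^ j < A / 2 :=
    hgeo.eventually (gt_mem_nhds (by positivity))
  obtain ⟨K0, hK0⟩ := eventually_atTop.1 hev
  set K : ℕ := max K0 1 with hKdef
  have hub : ∀ j, K ≤ j → C * ρ ^ j ≤ A / 2 * r ^ j := by
    intro j hj
    have h1 := hK0 j (le_trans (le_max_left _ _) hj)
    have h2 : C * (ρ / r) ^ j = C * ρ ^ j / r ^ j := by rw [div_pow]; ring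
    rw [h2, div_lt_iff₀ (by positivity)] at h1
    nlinarith [pow_pos hr0 j]
  have hglb : ∀ j, K ≤ j → A / 2 * r ^ j ≤ g j := by
    intro j hj
    have h1 := hbd j (le_trans (le_max_right _ _) hj)
    have h2 := hub j hj
    have h3 := neg_abs_le (e j)
    rw [hge]
    linarith
  have hgub : ∀ j, K ≤ j → g j ≤ 3 / 2 * A * r ^ j := by
    intro j hj
    have h1 := hbd j (le_trans (le_max_right _ _) hj)
    have h2 := hub j hj
    have h3 := le_abs_self (e j)
    rw [hge]
    linarith
  have hgpos : ∀ j, K ≤ j → 0 < g j := fun j hj =>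
    lt_of_lt_of_le (by positivity) (hglb j hj)
  -- main bound
  set Kc : ℝ := 2 * C / A ^ 2 * (1 - σ)⁻¹ * (A * (r - 1) / r) * (3 / 2 * A) with hKc
  apply squeeze_zero_norm' (a := fun n => Kc * ρ ^ n)
  · filter_upwards [eventually_ge_atTop K] with n hn
    have hnk : ∀ k : ℕ, K ≤ n + k := fun k => le_trans hn (Nat.le_add_right n k)
    set S : ℝ := A * r ^ n * (r - 1) / r with hSdef
    have hSpos : 0 < S := by
      have : 0 < r - 1 := by linarith
      positivity
    -- summability
    have hsum1 : Summable (fun k : ℕ => (g (n + k))⁻¹) := by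
      apply Summable.of_nonneg_of_le
        (fun k => le_of_lt (inv_pos.2 (hgpos _ (hnk k))))
        (fun k => ?_) (summable_shift_geom (A / 2) r hr n)
      exact inv_anti₀ (by positivity) (hglb _ (hnk k))
    have hsum2 : Summable (fun k : ℕ => (A * r ^ (n + k))⁻¹) :=
      summable_shift_geom A r hr n
    set T : ℝ := ∑' k : ℕ, (g (n + k))⁻¹ with hTdef
    have hTpos : 0 < T :=
      Summable.tsum_pos hsum1 (fun k => le_of_lt (inv_pos.2 (hgpos _ (hnk k)))) 0
        (inv_pos.2 (hgpos _ (hnk 0)))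
    -- termwise bound
    have hterm : ∀ k : ℕ, |(g (n + k))⁻¹ - (A * r ^ (n + k))⁻¹| ≤ 2 * C / A ^ 2 * σ ^ (n + k) := by
      intro k
      set j := n + k
      have h1 : |A * r ^ j - g j| ≤ C * ρ ^ j := by
        rw [hge]
        simpa [abs_sub_comm] using hbd j (le_trans (le_max_right _ _) (hnk k))
      have h2 := abs_inv_sub_inv_le (hgpos j (hnk k)) (by positivity : (0:ℝ) < A * r ^ j) h1
      refine le_trans h2 ?_
      have h3 : C * ρ ^ j / (g j * (A * r ^ j)) ≤ C * ρ ^ j / (A / 2 * r ^ j * (A * r ^ j)) := by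
        gcongr
        exact hglb j (hnk k)
      refine le_trans h3 (le_of_eq ?_)
      have h4 : σ ^ j = ρ ^ j / (r ^ j) ^ 2 := by
        rw [hσdef, div_pow, ← pow_mul, ← pow_mul, Nat.mul_comm]
      rw [h4]
      field_simp
    -- tsum bound
    have hVsum : Summable (fun k : ℕ => 2 * C / A ^ 2 * σ ^ (n + k)) := by
      apply Summable.congr ((summable_geometric_of_lt_one hσ0 hσ1).mul_left
        (2 * C / A ^ 2 * σ ^ n))
      intro k
      rw [pow_add]
      ring
    have hVtsum : ∑' k : ℕ, 2 * C / A ^ 2 * σ ^ (n + k)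
        = 2 * C / A ^ 2 * σ ^ n * (1 - σ)⁻¹ := by
      have : (fun k : ℕ => 2 * C / A ^ 2 * σ ^ (n + k))
          = fun k => (2 * C / A ^ 2 * σ ^ n) * σ ^ k := by
        funext k; rw [pow_add]; ring
      rw [this, tsum_mul_left, tsum_geometric_of_lt_one hσ0 hσ1]
    have hV : |T - S⁻¹| ≤ 2 * C / A ^ 2 * σ ^ n * (1 - σ)⁻¹ := by
      rw [hTdef, hSdef, ← tsum_shift_geom A r hA hr n, ← Summable.tsum_sub hsum1 hsum2]
      calc |∑' k : ℕ, ((g (n + k))⁻¹ - (A * r ^ (n + k))⁻¹)|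
          ≤ ∑' k : ℕ, |(g (n + k))⁻¹ - (A * r ^ (n + k))⁻¹| := by
            simpa [Real.norm_eq_abs] using
              norm_tsum_le_tsum_norm (f := fun k : ℕ => (g (n + k))⁻¹ - (A * r ^ (n + k))⁻¹)
                (by simpa [Real.norm_eq_abs] using (hsum1.sub hsum2).abs)
        _ ≤ ∑' k : ℕ, 2 * C / A ^ 2 * σ ^ (n + k) :=
            Summable.tsum_le_tsum hterm (hsum1.sub hsum2).abs hVsum
        _ = 2 * C / A ^ 2 * σ ^ n * (1 - σ)⁻¹ := hVtsum
    -- assemble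
    have hid : T⁻¹ - S = (S⁻¹ - T) * S * T⁻¹ := by
      field_simp
    have hgn : 0 < g n := hgpos n hn
    have hTinv : T⁻¹ ≤ g n := by
      have h1 : (g n)⁻¹ ≤ T := by
        have := Summable.le_tsum hsum1 0 (fun k _ => le_of_lt (inv_pos.2 (hgpos _ (hnk k))))
        simpa using this
      have h2 := inv_anti₀ (inv_pos.2 hgn) h1
      rwa [inv_inv] at h2
    have hρn : ρ ^ n = σ ^ n * (r ^ n) ^ 2 := by
      rw [← hσr, mul_pow, ← pow_mul, ← pow_mul, Nat.mul_comm]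
    have h1σ : (0:ℝ) ≤ (1 - σ)⁻¹ := by
      have : (0:ℝ) < 1 - σ := by linarith
      positivity
    have hid : T⁻¹ - S = (T - S⁻¹) * (-(S * T⁻¹)) := by
      field_simp
      ring
    rw [Real.norm_eq_abs, hid, abs_mul, abs_neg, abs_mul,
      abs_of_pos hSpos, abs_of_pos (inv_pos.2 hTpos)]
    calc |T - S⁻¹| * (S * T⁻¹)
        ≤ (2 * C / A ^ 2 * σ ^ n * (1 - σ)⁻¹) * (S * (g n)) := by
          have h0 : (0:ℝ) ≤ S * T⁻¹ := by positivity
          have h2 : S * T⁻¹ ≤ S * g n := by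
            gcongr
          have h3 : (0:ℝ) ≤ |T - S⁻¹| := abs_nonneg _
          nlinarith [mul_le_mul hV h2 h0 (by positivity : (0:ℝ) ≤ 2 * C / A ^ 2 * σ ^ n * (1 - σ)⁻¹)]
      _ ≤ (2 * C / A ^ 2 * σ ^ n * (1 - σ)⁻¹) * (S * (3 / 2 * A * r ^ n)) := by
          gcongr
          exact hgub n hn
      _ = Kc * ρ ^ n := by
          rw [hKc, hSdef, hρn]
          ring
  · simpa using (tendsto_pow_atTop_nhds_zero_of_lt_one hρ0 hρ1).const_mul Kc

lemma abs_zpow' (x : ℝ) (z : ℤ) : |x ^ z| = |x| ^ z := by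
  cases z with
  | ofNat n => simp [zpow_natCast, abs_pow]
  | negSucc n => rw [zpow_negSucc, zpow_negSucc, abs_inv, abs_pow]

/-- Corollary 3.1: the inverse of the tail sum `Σ_{k=n}^∞ 1/(s₀·W_{mk+l₀})` is
asymptotically `s₀·W_{mn+l₀} − s₀·W_{m(n−1)+l₀}`. -/
theorem inverse_tail_sum_single_term (p q a b : ℤ) (α β c₁ c₂ : ℝ)
    (hp : 1 ≤ p)
    (hdisc : 0 < (p : ℝ) ^ 2 + 4 * q)
    (hcond : (p : ℝ) ^ 2 + 2 * q - 2 < p * Real.sqrt ((p : ℝ) ^ 2 + 4 * q))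
    (hα : α = ((p : ℝ) + Real.sqrt ((p : ℝ) ^ 2 + 4 * q)) / 2)
    (hβ : β = ((p : ℝ) - Real.sqrt ((p : ℝ) ^ 2 + 4 * q)) / 2)
    (hc₁ : c₁ = ((b : ℝ) - a * β) / (α - β))
    (hc₂ : c₂ = ((b : ℝ) - a * α) / (α - β))
    (hc₁pos : 0 < c₁)
    (W : ℤ → ℝ) (hW : ∀ n : ℤ, W n = c₁ * α ^ n - c₂ * β ^ n)
    (m s₀ : ℕ) (hm : 1 ≤ m) (hs₀ : 1 ≤ s₀)
    (l₀ : ℤ) (hl₀ : 1 - (m : ℤ) ≤ l₀) :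
    Tendsto (fun n : ℕ =>
      (∑' k : ℕ, 1 / ((s₀ : ℝ) * W ((m : ℤ) * (n + k) + l₀)))⁻¹ -
      ((s₀ : ℝ) * W ((m : ℤ) * n + l₀) - (s₀ : ℝ) * W ((m : ℤ) * ((n : ℤ) - 1) + l₀)))
      atTop (nhds 0) := by
  have hp1 : (1:ℝ) ≤ (p:ℝ) := by exact_mod_cast hp
  set D := Real.sqrt ((p : ℝ) ^ 2 + 4 * q) with hD
  have hD0 : 0 ≤ D := Real.sqrt_nonneg _
  have hDsq : D ^ 2 = (p:ℝ) ^ 2 + 4 * q := Real.sq_sqrt hdisc.le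
  have hD1 : 1 ≤ D := by
    have hint : (1:ℝ) ≤ (p:ℝ) ^ 2 + 4 * q := by
      have h1 : (0:ℤ) < p ^ 2 + 4 * q := by
        have : (0:ℝ) < ((p ^ 2 + 4 * q : ℤ) : ℝ) := by push_cast; linarith
        exact_mod_cast this
      have h2 : (1:ℤ) ≤ p ^ 2 + 4 * q := h1
      have : (1:ℝ) ≤ ((p ^ 2 + 4 * q : ℤ) : ℝ) := by exact_mod_cast h2
      push_cast at this; linarith
    nlinarith
  have hα1 : 1 ≤ α := by rw [hα]; linarith
  have hβsq : β ^ 2 < 1 := by rw [hβ]; nlinarith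
  have hβabs : |β| < 1 := (sq_lt_one_iff_abs_lt_one β).1 hβsq
  have hs₀R : (0:ℝ) < (s₀ : ℝ) := by exact_mod_cast Nat.lt_of_lt_of_le Nat.zero_lt_one hs₀
  have hmZ : (1:ℤ) ≤ (m:ℤ) := by exact_mod_cast hm
  rcases eq_or_lt_of_le hα1 with hα1' | hαgt
  · -- degenerate case α = 1
    have hD2 : D = 2 - p := by rw [hα] at hα1'; linarith
    have hβ0 : β = 0 := by
      have hple : (p:ℝ) ≤ 1 := by linarith
      have hpe : (p:ℝ) = 1 := le_antisymm hple hp1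
      rw [hβ, hpe, hD2, hpe]; ring
    apply Tendsto.congr' (f₁ := fun _ : ℕ => (0:ℝ)) _ tendsto_const_nhds
    filter_upwards [eventually_ge_atTop 2] with n hn
    have hnZ : (2:ℤ) ≤ (n:ℤ) := by exact_mod_cast hn
    have hWval : ∀ z : ℤ, z ≠ 0 → W z = c₁ := by
      intro z hz
      rw [hW, ← hα1', hβ0, one_zpow, zero_zpow z hz]
      ring
    have ht : (∑' k : ℕ, 1 / ((s₀ : ℝ) * W ((m : ℤ) * ((n:ℤ) + (k:ℤ)) + l₀)))
        = ∑' _ : ℕ, 1 / ((s₀:ℝ) * c₁) := by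
      apply tsum_congr
      intro k
      rw [hWval]
      have hk : (0:ℤ) ≤ (k:ℤ) := Int.ofNat_nonneg k
      nlinarith
    rw [ht]
    have hne : 1 / ((s₀:ℝ) * c₁) ≠ 0 := by positivity
    have hns : ¬ Summable (fun _ : ℕ => 1 / ((s₀:ℝ) * c₁)) := by
      intro h
      rw [summable_const_iff] at h
      exact hne h
    rw [tsum_eq_zero_of_not_summable hns]
    rw [hWval ((m:ℤ) * n + l₀) (by nlinarith), hWval ((m:ℤ) * ((n:ℤ) - 1) + l₀) (by nlinarith)]
    simp
  · -- main case: 1 < α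
    have hα0 : (0:ℝ) < α := lt_trans one_pos hαgt
    set r : ℝ := α ^ m with hrdef
    have hr : 1 < r := one_lt_pow₀ hαgt (by omega)
    set A : ℝ := (s₀:ℝ) * c₁ * α ^ l₀ with hAdef
    have hApos : 0 < A := by
      have := zpow_pos hα0 l₀
      positivity
    set g : ℕ → ℝ := fun j => (s₀:ℝ) * W ((m:ℤ) * j + l₀) with hgdef
    set e : ℕ → ℝ := fun j => g j - A * r ^ j with hedef
    have hge : ∀ j, g j = A * r ^ j + e j := fun j => by rw [hedef]; ring
    have hαz : ∀ j : ℕ, α ^ ((m:ℤ) * j + l₀) = α ^ l₀ * r ^ j := by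
      intro j
      rw [zpow_add₀ (ne_of_gt hα0)]
      have h1 : (m:ℤ) * (j:ℕ) = ((m * j : ℕ) : ℤ) := by push_cast; ring
      rw [h1, zpow_natCast, pow_mul, hrdef]
      ring
    have heq : ∀ j : ℕ, e j = -((s₀:ℝ) * c₂) * β ^ ((m:ℤ) * j + l₀) := by
      intro j
      rw [hedef]
      simp only [hgdef, hW, hαz, hAdef]
      ring
    have hidx : ∀ j : ℕ, 1 ≤ j → 1 ≤ (m:ℤ) * j + l₀ := by
      intro j hj
      have hjZ : (1:ℤ) ≤ (j:ℤ) := by exact_mod_cast hj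
      nlinarith
    -- choose C, ρ
    obtain ⟨C, ρ, hC, hρ0, hρ1, hbd⟩ :
        ∃ C ρ : ℝ, 0 ≤ C ∧ 0 ≤ ρ ∧ ρ < 1 ∧ ∀ j, 1 ≤ j → |e j| ≤ C * ρ ^ j := by
      by_cases hβ0 : β = 0
      · refine ⟨0, 1/2, le_refl _, by norm_num, by norm_num, ?_⟩
        intro j hj
        rw [heq, hβ0, zero_zpow _ (by have := hidx j hj; omega)]
        simp
      · refine ⟨|(s₀:ℝ) * c₂| * |β| ^ l₀, |β| ^ m, by positivity, by positivity,
          pow_lt_one₀ (abs_nonneg β) hβabs (by omega), ?_⟩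
        intro j hj
        have hβa0 : (0:ℝ) < |β| := abs_pos.2 hβ0
        have h2 : |β| ^ ((m:ℤ) * j + l₀) = |β| ^ l₀ * (|β| ^ m) ^ j := by
          rw [zpow_add₀ (ne_of_gt hβa0)]
          have h1 : (m:ℤ) * (j:ℕ) = ((m * j : ℕ) : ℤ) := by push_cast; ring
          rw [h1, zpow_natCast, pow_mul]
          ring
        rw [heq, abs_mul, abs_neg, abs_zpow', h2]
        ring_nf
        exact le_refl _
    have hcore := core_tendsto A r C ρ hApos hr hC hρ0 hρ1 g e hge hbd
    have hCρ : Tendsto (fun n : ℕ => C * ρ ^ n) atTop (nhds 0) := by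
      simpa using (tendsto_pow_atTop_nhds_zero_of_lt_one hρ0 hρ1).const_mul C
    have he0 : Tendsto e atTop (nhds 0) := by
      apply squeeze_zero_norm' _ hCρ
      filter_upwards [eventually_ge_atTop 1] with j hj
      simpa [Real.norm_eq_abs] using hbd j hj
    have he1 : Tendsto (fun n : ℕ => e (n - 1)) atTop (nhds 0) :=
      he0.comp (tendsto_sub_atTop_nat 1)
    have hediff : Tendsto (fun n : ℕ => e n - e (n - 1)) atTop (nhds 0) := by
      simpa using he0.sub he1
    have htotal : Tendsto (fun n : ℕ =>
        ((∑' k : ℕ, (g (n + k))⁻¹)⁻¹ - A * r ^ n * (r - 1) / r) - (e n - e (n - 1)))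
        atTop (nhds 0) := by
      simpa using hcore.sub hediff
    apply Tendsto.congr' _ htotal
    filter_upwards [eventually_ge_atTop 1] with n hn
    obtain ⟨j, rfl⟩ : ∃ j, n = j + 1 := ⟨n - 1, by omega⟩
    have ht : (∑' k : ℕ, 1 / ((s₀ : ℝ) * W ((m : ℤ) * ((↑(j+1) : ℤ) + (k:ℤ)) + l₀)))
        = ∑' k : ℕ, (g ((j+1) + k))⁻¹ := by
      apply tsum_congr
      intro k
      have hik : (m:ℤ) * ((↑(j+1) : ℤ) + (k:ℤ)) + l₀ = (m:ℤ) * (↑(j+1+k) : ℤ) + l₀ := by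
        push_cast
        ring
      rw [one_div, hgdef, hik]
    have hg1 : (s₀ : ℝ) * W ((m : ℤ) * (↑(j+1) : ℤ) + l₀) = g (j+1) := by rw [hgdef]
    have hg2 : (s₀ : ℝ) * W ((m : ℤ) * ((↑(j+1) : ℤ) - 1) + l₀) = g j := by
      have hik : (m:ℤ) * ((↑(j+1) : ℤ) - 1) + l₀ = (m:ℤ) * (↑j : ℤ) + l₀ := by
        push_cast
        ring
      rw [hgdef, hik]
    have hj1 : (j + 1) - 1 = j := by omega
    rw [ht, hg1, hg2, hj1, hge (j+1), hge j]
    have hr0 : (0:ℝ) ≠ r := ne_of_lt (lt_trans one_pos hr)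
    have hpow : A * r ^ (j+1) * (r - 1) / r = A * r ^ (j+1) - A * r ^ j := by
      field_simp
      ring
    rw [hpow]
    ring
end

section
/- Let p ≥ 1 and q be integers with p² + 4q > 0 and p² + 2q − 2 < p·√(p² + 4q), set α = (p + √(p² + 4q))/2, β = (p − √(p² + 4q))/2, let a, b be integers with c₁ = (b − aβ)/(α − β) > 0, and define Wₙ = c₁αⁿ − c₂βⁿ where c₂ = (b − aα)/(α − β). Let m ≥ 1 be an integer, let l₀, l₁ be integers with l₀, l₁ ≥ 1 − m, and let s₀, s₁ be natural numbers, not both zero. Then lim_{n→∞} [ (Σ_{k=n}^{∞} 1/(s₀·W_{mk+l₀} + s₁·W_{mk+l₁}))^{−1} − (s₀·W_{mn+l₀} − s₀·W_{m(n−1)+l₀} + s₁·W_{mn+l₁} − s₁·W_{m(n−1)+l₁}) ] = 0. -/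
open Filter

set_option maxHeartbeats 1000000 in
lemma core_tail (r C : ℝ) (hr : 1 < r) (hC : 0 < C) (ε : ℕ → ℝ)
    (hε : Tendsto ε atTop (nhds 0)) (g : ℕ → ℝ)
    (hg : ∀ j, g j = C * r ^ j + ε j) :
    Tendsto (fun n : ℕ => (∑' k : ℕ, 1 / g (n + k))⁻¹ - C * (1 - r⁻¹) * r ^ n)
      atTop (nhds 0) := by
  have hr0 : (0:ℝ) < r := lt_trans one_pos hr
  have hrr : ∀ j : ℕ, r ^ j * r⁻¹ ^ j = 1 := fun j => by
    rw [← mul_pow, mul_inv_cancel₀ hr0.ne', one_pow]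
  have hri0 : 0 < r⁻¹ := by positivity
  have hri1 : r⁻¹ < 1 := by
    rw [inv_lt_one_iff₀]; right; exact hr
  have hri1' : 0 < 1 - r⁻¹ := by linarith
  set K : ℝ := (1 - r⁻¹)⁻¹ / C with hK
  have hK0 : 0 < K := by positivity
  -- bound on ε eventually
  obtain ⟨N, hN⟩ : ∃ N : ℕ, ∀ j ≥ N, |ε j| ≤ C / 2 := by
    have := (Metric.tendsto_atTop.mp hε) (C/2) (by positivity)
    obtain ⟨N, hN⟩ := this
    exact ⟨N, fun j hj => by
      have := hN j hj
      rw [Real.dist_eq, sub_zero] at this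
      linarith⟩
  have hrpow1 : ∀ j : ℕ, (1:ℝ) ≤ r ^ j := fun j => one_le_pow₀ hr.le
  have hglow : ∀ j ≥ N, C / 2 * r ^ j ≤ g j := by
    intro j hj
    rw [hg]
    have h1 := hN j hj
    have h2 := hrpow1 j
    have := abs_le.mp h1
    nlinarith
  have hgpos : ∀ j ≥ N, 0 < g j := fun j hj =>
    lt_of_lt_of_le (by positivity) (hglow j hj)
  have hgup : ∀ j ≥ N, g j ≤ 3 * C / 2 * r ^ j := by
    intro j hj
    rw [hg]
    have h1 := hN j hj
    have h2 := hrpow1 j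
    have := abs_le.mp h1
    nlinarith
  -- h n
  set h : ℕ → ℝ := fun n => ∑' k : ℕ, |ε (n + k)| * ((r⁻¹) ^ 2) ^ k with hh
  have hri2 : (0:ℝ) ≤ (r⁻¹)^2 := by positivity
  have hri2' : (r⁻¹)^2 < 1 := by nlinarith
  have hboundsum : Summable (fun k : ℕ => C / 2 * ((r⁻¹) ^ 2) ^ k) :=
    (summable_geometric_of_lt_one hri2 hri2').mul_left _
  have hh0 : Tendsto h atTop (nhds 0) := by
    have h00 : (∑' _ : ℕ, (0:ℝ)) = 0 := tsum_zero
    have := tendsto_tsum_of_dominated_convergence (𝓕 := atTop)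
      (f := fun n k => |ε (n + k)| * ((r⁻¹) ^ 2) ^ k)
      (g := fun _ : ℕ => (0:ℝ))
      (bound := fun k : ℕ => C / 2 * ((r⁻¹) ^ 2) ^ k)
      hboundsum
      (fun k => by
        have h1 : Tendsto (fun n : ℕ => ε (n + k)) atTop (nhds 0) :=
          hε.comp (tendsto_add_atTop_nat k)
        have h2 := (h1.abs).mul_const (((r⁻¹) ^ 2) ^ k)
        simpa using h2)
      (by
        filter_upwards [eventually_ge_atTop N] with n hn k
        have : |ε (n + k)| ≤ C / 2 := hN (n + k) (le_add_right hn)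
        have h3 : (0:ℝ) ≤ ((r⁻¹) ^ 2) ^ k := by positivity
        rw [Real.norm_eq_abs, abs_mul, abs_abs, abs_of_nonneg h3]
        exact mul_le_mul_of_nonneg_right this h3)
    rw [h00] at this
    exact this
  apply squeeze_zero_norm' (a := fun n => 3 / (C^2 * K^2) * h n)
  · -- eventual bound
    filter_upwards [eventually_ge_atTop N] with n hn
    -- summabilities
    have hsumg : Summable (fun k : ℕ => 1 / g (n + k)) := by
      apply Summable.of_nonneg_of_le (fun k => by
        have := hgpos (n+k) (le_add_right hn); positivity)
        (fun k => ?_)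
        (((summable_geometric_of_lt_one hri0.le hri1).mul_left (2 / C * (r⁻¹) ^ n)))
      have h1 := hglow (n+k) (le_add_right hn)
      have h2 : (0:ℝ) < C / 2 * r ^ (n+k) := by positivity
      calc 1 / g (n+k) ≤ 1 / (C / 2 * r ^ (n+k)) :=
            one_div_le_one_div_of_le h2 h1
        _ = 2 / C * (r⁻¹) ^ n * (r⁻¹) ^ k := by
            rw [pow_add]
            field_simp
            linear_combination (-(r ^ k * r⁻¹ ^ k)) * hrr n - hrr k
    have hsumgeo : Summable (fun k : ℕ => 1 / (C * r ^ (n + k))) := by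
      have : (fun k : ℕ => 1 / (C * r ^ (n + k)))
          = fun k => (1 / (C * r ^ n)) * (r⁻¹) ^ k := by
        funext k; rw [pow_add]; field_simp; rw [one_div]; exact (hrr k).symm
      rw [this]
      exact (summable_geometric_of_lt_one hri0.le hri1).mul_left _
    have hS : (∑' k : ℕ, 1 / (C * r ^ (n + k))) = K * (r⁻¹) ^ n := by
      have e1 : (fun k : ℕ => 1 / (C * r ^ (n + k)))
          = fun k => (1 / (C * r ^ n)) * (r⁻¹) ^ k := by
        funext k; rw [pow_add]; field_simp; rw [one_div]; exact (hrr k).symm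
      rw [e1, tsum_mul_left, tsum_geometric_of_lt_one hri0.le hri1, hK]
      rw [inv_pow]
      field_simp
    set T : ℝ := ∑' k : ℕ, 1 / g (n + k) with hT
    -- lower bound on T
    have hTlow : 2 / 3 * K * (r⁻¹) ^ n ≤ T := by
      have hsumlow : Summable (fun k : ℕ => 2 / (3 * C) * ((r⁻¹) ^ n * (r⁻¹) ^ k)) :=
        ((summable_geometric_of_lt_one hri0.le hri1).mul_left _).mul_left _
      have hle : ∀ k : ℕ, 2 / (3 * C) * ((r⁻¹) ^ n * (r⁻¹) ^ k) ≤ 1 / g (n + k) := by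
        intro k
        have h1 := hgup (n+k) (le_add_right hn)
        have h2 := hgpos (n+k) (le_add_right hn)
        have h3 : (0:ℝ) < 3 * C / 2 * r ^ (n+k) := by positivity
        have h4 : 1 / (3 * C / 2 * r ^ (n+k)) ≤ 1 / g (n+k) :=
          one_div_le_one_div_of_le h2 h1
        calc 2 / (3 * C) * ((r⁻¹) ^ n * (r⁻¹) ^ k)
            = 1 / (3 * C / 2 * r ^ (n+k)) := by
              rw [pow_add]; field_simp; try ring; linear_combination (r ^ k * r⁻¹ ^ k) * hrr n + hrr k
          _ ≤ 1 / g (n+k) := h4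
      have := Summable.tsum_le_tsum hle hsumlow hsumg
      calc 2 / 3 * K * (r⁻¹) ^ n
          = ∑' k : ℕ, 2 / (3 * C) * ((r⁻¹) ^ n * (r⁻¹) ^ k) := by
            rw [tsum_mul_left, tsum_mul_left, tsum_geometric_of_lt_one hri0.le hri1, hK]
            field_simp
        _ ≤ T := this
    have hTpos : 0 < T := lt_of_lt_of_le (by positivity) hTlow
    -- difference of sums
    have hd : ∀ k : ℕ, 1 / (C * r ^ (n + k)) - 1 / g (n + k)
        = ε (n + k) / (C * r ^ (n + k) * g (n + k)) := by
      intro k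
      have h2 := (hgpos (n+k) (le_add_right hn)).ne'
      have hcr : C * r ^ (n+k) ≠ 0 := by positivity
      rw [div_sub_div 1 1 hcr h2, one_mul, mul_one]
      congr 1
      rw [hg]
      ring
    have hdabs : ∀ k : ℕ, ‖1 / (C * r ^ (n + k)) - 1 / g (n + k)‖
        ≤ 2 / C^2 * ((r⁻¹)^2) ^ n * (|ε (n + k)| * ((r⁻¹) ^ 2) ^ k) := by
      intro k
      rw [hd k, Real.norm_eq_abs, abs_div]
      have h2 := hgpos (n+k) (le_add_right hn)
      have h1 := hglow (n+k) (le_add_right hn)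
      have hden : C^2 / 2 * (r ^ (n+k))^2 ≤ |C * r ^ (n + k) * g (n + k)| := by
        rw [abs_of_pos (by positivity)]
        have : C * r ^ (n+k) * (C / 2 * r ^ (n+k)) ≤ C * r ^ (n+k) * g (n+k) :=
          mul_le_mul_of_nonneg_left h1 (by positivity)
        nlinarith [hrpow1 (n+k)]
      have hden0 : (0:ℝ) < C^2 / 2 * (r ^ (n+k))^2 := by positivity
      calc |ε (n+k)| / |C * r ^ (n + k) * g (n + k)|
          ≤ |ε (n+k)| / (C^2 / 2 * (r ^ (n+k))^2) :=
            div_le_div_of_nonneg_left (abs_nonneg _) hden0 hden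
        _ = 2 / C^2 * ((r⁻¹)^2) ^ n * (|ε (n + k)| * ((r⁻¹) ^ 2) ^ k) := by
            rw [pow_add]
            field_simp
            linear_combination (-(|ε (n + k)| * r ^ (k * 2) * r⁻¹ ^ (k * 2))) * hrr (n * 2) - |ε (n + k)| * hrr (k * 2)
    have hsumh : Summable (fun k : ℕ => |ε (n + k)| * ((r⁻¹) ^ 2) ^ k) :=
      Summable.of_nonneg_of_le (fun k => by positivity)
        (fun k => mul_le_mul_of_nonneg_right (hN (n+k) (le_add_right hn)) (by positivity))
        hboundsum
    have hsumd : Summable (fun k : ℕ => ‖1 / (C * r ^ (n + k)) - 1 / g (n + k)‖) :=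
      Summable.of_nonneg_of_le (fun k => norm_nonneg _) hdabs
        (hsumh.mul_left _)
    have hΔ : |(∑' k : ℕ, 1 / (C * r ^ (n + k))) - T|
        ≤ 2 / C^2 * ((r⁻¹)^2) ^ n * h n := by
      rw [hT, ← Summable.tsum_sub hsumgeo hsumg]
      calc |∑' k : ℕ, (1 / (C * r ^ (n + k)) - 1 / g (n + k))|
          ≤ ∑' k : ℕ, ‖1 / (C * r ^ (n + k)) - 1 / g (n + k)‖ :=
            norm_tsum_le_tsum_norm hsumd
        _ ≤ ∑' k : ℕ, 2 / C^2 * ((r⁻¹)^2) ^ n * (|ε (n + k)| * ((r⁻¹) ^ 2) ^ k) :=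
            Summable.tsum_le_tsum hdabs hsumd (hsumh.mul_left _)
        _ = 2 / C^2 * ((r⁻¹)^2) ^ n * h n := tsum_mul_left
    -- rewrite target term as S⁻¹
    have hSinv : C * (1 - r⁻¹) * r ^ n = (K * (r⁻¹) ^ n)⁻¹ := by
      rw [hK, inv_pow]
      field_simp
    have hexpr : T⁻¹ - C * (1 - r⁻¹) * r ^ n
        = ((∑' k : ℕ, 1 / (C * r ^ (n + k))) - T) / (T * (K * (r⁻¹) ^ n)) := by
      rw [hSinv, hS]
      have h1 : T ≠ 0 := ne_of_gt hTpos
      have h2 : K * (r⁻¹) ^ n ≠ 0 := by positivity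
      field_simp
    rw [hexpr, Real.norm_eq_abs, abs_div]
    have hTS : 2/3 * K^2 * ((r⁻¹)^2) ^ n ≤ |T * (K * (r⁻¹) ^ n)| := by
      rw [abs_of_pos (by positivity)]
      have : (2 / 3 * K * (r⁻¹) ^ n) * (K * (r⁻¹) ^ n) ≤ T * (K * (r⁻¹) ^ n) :=
        mul_le_mul_of_nonneg_right hTlow (by positivity)
      calc 2/3 * K^2 * ((r⁻¹)^2) ^ n
          = (2 / 3 * K * (r⁻¹) ^ n) * (K * (r⁻¹) ^ n) := by
            rw [← pow_mul, pow_mul']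
            ring
        _ ≤ T * (K * (r⁻¹) ^ n) := this
    have hTS0 : (0:ℝ) < 2/3 * K^2 * ((r⁻¹)^2) ^ n := by positivity
    have hh_nonneg : 0 ≤ h n := tsum_nonneg (fun k => by positivity)
    calc |(∑' k : ℕ, 1 / (C * r ^ (n + k))) - T| / |T * (K * (r⁻¹) ^ n)|
        ≤ (2 / C^2 * ((r⁻¹)^2) ^ n * h n) / (2/3 * K^2 * ((r⁻¹)^2) ^ n) := by
          apply div_le_div₀ (by positivity) hΔ hTS0 hTS
      _ = 3 / (C^2 * K^2) * h n := by
          have : ((r⁻¹)^2 : ℝ) ^ n ≠ 0 := by positivity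
          field_simp
  · have := hh0.const_mul (3 / (C^2 * K^2))
    rw [mul_zero] at this
    exact this
set_option maxHeartbeats 1000000 in
/-- Corollary 3.2: the inverse of the tail sum `Σ_{k=n}^∞ 1/(s₀·W_{mk+l₀} + s₁·W_{mk+l₁})`
is asymptotically `s₀·W_{mn+l₀} − s₀·W_{m(n−1)+l₀} + s₁·W_{mn+l₁} − s₁·W_{m(n−1)+l₁}`. -/
theorem inverse_tail_sum_two_terms (p q a b : ℤ) (α β c₁ c₂ : ℝ)
    (hp : 1 ≤ p)
    (hdisc : 0 < (p : ℝ) ^ 2 + 4 * q)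
    (hcond : (p : ℝ) ^ 2 + 2 * q - 2 < p * Real.sqrt ((p : ℝ) ^ 2 + 4 * q))
    (hα : α = ((p : ℝ) + Real.sqrt ((p : ℝ) ^ 2 + 4 * q)) / 2)
    (hβ : β = ((p : ℝ) - Real.sqrt ((p : ℝ) ^ 2 + 4 * q)) / 2)
    (hc₁ : c₁ = ((b : ℝ) - a * β) / (α - β))
    (hc₂ : c₂ = ((b : ℝ) - a * α) / (α - β))
    (hc₁pos : 0 < c₁)
    (W : ℤ → ℝ) (hW : ∀ n : ℤ, W n = c₁ * α ^ n - c₂ * β ^ n)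
    (m : ℕ) (hm : 1 ≤ m)
    (l₀ l₁ : ℤ) (hl₀ : 1 - (m : ℤ) ≤ l₀) (hl₁ : 1 - (m : ℤ) ≤ l₁)
    (s₀ s₁ : ℕ) (hs : s₀ ≠ 0 ∨ s₁ ≠ 0) :
    Tendsto (fun n : ℕ =>
      (∑' k : ℕ, 1 / ((s₀ : ℝ) * W ((m : ℤ) * (n + k) + l₀) +
        (s₁ : ℝ) * W ((m : ℤ) * (n + k) + l₁)))⁻¹ -
      ((s₀ : ℝ) * W ((m : ℤ) * n + l₀) - (s₀ : ℝ) * W ((m : ℤ) * ((n : ℤ) - 1) + l₀) +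
        (s₁ : ℝ) * W ((m : ℤ) * n + l₁) - (s₁ : ℝ) * W ((m : ℤ) * ((n : ℤ) - 1) + l₁)))
      atTop (nhds 0) := by
  have hp1 : (1:ℝ) ≤ (p:ℝ) := by exact_mod_cast hp
  have hsqpos : 0 < Real.sqrt ((p : ℝ) ^ 2 + 4 * q) := Real.sqrt_pos.mpr hdisc
  have hsq : Real.sqrt ((p : ℝ) ^ 2 + 4 * q) ^ 2 = (p : ℝ) ^ 2 + 4 * q :=
    Real.sq_sqrt hdisc.le
  have hβ1 : |β| < 1 := by
    rw [abs_lt, hβ]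
    constructor <;> nlinarith [hsq, hsqpos, hcond, hp1]
  have hαpos : 0 < α := by rw [hα]; positivity
  have hαne : α ≠ 0 := ne_of_gt hαpos
  -- index positivity helper
  have hidx : ∀ (l : ℤ), 1 - (m : ℤ) ≤ l → ∀ j : ℤ, 1 ≤ j → 1 ≤ (m : ℤ) * j + l := by
    intro l hl j hj
    have hm' : (1:ℤ) ≤ (m:ℤ) := by exact_mod_cast hm
    nlinarith
  by_cases h1 : 1 < α
  · -- main case
    set r : ℝ := α ^ m with hrdef
    have hr : 1 < r := one_lt_pow₀ h1 (by omega)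
    have hr0 : (0:ℝ) < r := lt_trans one_pos hr
    set C0 : ℝ := c₁ * ((s₀ : ℝ) * α ^ l₀ + (s₁ : ℝ) * α ^ l₁) with hC0def
    have hC0 : 0 < C0 := by
      have h0 : (0:ℝ) < α ^ l₀ := zpow_pos hαpos _
      have h0' : (0:ℝ) < α ^ l₁ := zpow_pos hαpos _
      have hsum : (0:ℝ) < (s₀ : ℝ) * α ^ l₀ + (s₁ : ℝ) * α ^ l₁ := by
        rcases hs with hs | hs
        · have h3 : (0:ℝ) < (s₀:ℝ) := by
            have : (1:ℝ) ≤ (s₀:ℝ) := by exact_mod_cast Nat.one_le_iff_ne_zero.mpr hs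
            linarith
          have h4 := mul_pos h3 h0
          have h5 : (0:ℝ) ≤ (s₁ : ℝ) * α ^ l₁ := by positivity
          linarith
        · have h3 : (0:ℝ) < (s₁:ℝ) := by
            have : (1:ℝ) ≤ (s₁:ℝ) := by exact_mod_cast Nat.one_le_iff_ne_zero.mpr hs
            linarith
          have h4 := mul_pos h3 h0'
          have h5 : (0:ℝ) ≤ (s₀ : ℝ) * α ^ l₀ := by positivity
          linarith
      rw [hC0def]
      exact mul_pos hc₁pos hsum
    set ε0 : ℕ → ℝ := fun j =>
      -(c₂ * ((s₀ : ℝ) * β ^ ((m:ℤ) * j + l₀) + (s₁ : ℝ) * β ^ ((m:ℤ) * j + l₁))) with hε0def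
    set g : ℕ → ℝ := fun j =>
      (s₀ : ℝ) * W ((m : ℤ) * j + l₀) + (s₁ : ℝ) * W ((m : ℤ) * j + l₁) with hgdef
    have hkey : ∀ (l : ℤ) (j : ℕ), α ^ ((m:ℤ) * j + l) = α ^ l * r ^ j := by
      intro l j
      rw [zpow_add₀ hαne, show ((m:ℤ) * (j:ℤ)) = ((m * j : ℕ) : ℤ) by push_cast; ring,
        zpow_natCast, pow_mul, hrdef]
      ring
    have hgid : ∀ j : ℕ, g j = C0 * r ^ j + ε0 j := by
      intro j
      simp only [hgdef, hε0def, hC0def, hW, hkey]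
      ring
    have hβtend : ∀ (l : ℤ), 1 - (m : ℤ) ≤ l →
        Tendsto (fun j : ℕ => β ^ ((m:ℤ) * j + l)) atTop (nhds 0) := by
      intro l hl
      by_cases hβ0 : β = 0
      · apply tendsto_const_nhds.congr'
        filter_upwards [eventually_ge_atTop 1] with j hj
        have hj' : (1:ℤ) ≤ (m:ℤ) * j + l := hidx l hl j (by exact_mod_cast hj)
        rw [hβ0, zero_zpow _ (by omega)]
      · have heq : ∀ j : ℕ, β ^ ((m:ℤ) * j + l) = β ^ l * (β ^ m) ^ j := by
          intro j
          rw [zpow_add₀ hβ0, show ((m:ℤ) * (j:ℤ)) = ((m * j : ℕ) : ℤ) by push_cast; ring,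
            zpow_natCast, pow_mul]
          ring
        have hnorm : ‖β ^ m‖ < 1 := by
          rw [Real.norm_eq_abs, abs_pow]
          calc |β| ^ m ≤ |β| ^ 1 :=
                pow_le_pow_of_le_one (abs_nonneg _) hβ1.le hm
            _ < 1 := by simpa using hβ1
        have := (tendsto_pow_atTop_nhds_zero_of_norm_lt_one hnorm).const_mul (β ^ l)
        rw [mul_zero] at this
        exact this.congr (fun j => (heq j).symm)
    have hε0tend : Tendsto ε0 atTop (nhds 0) := by
      have h0 := hβtend l₀ hl₀
      have h1' := hβtend l₁ hl₁
      have := (((h0.const_mul (s₀:ℝ)).add (h1'.const_mul (s₁:ℝ))).const_mul c₂).neg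
      simp only [mul_zero, add_zero, zero_add, neg_zero] at this
      exact this.congr (fun j => by simp only [hε0def])
    have core := core_tail r C0 hr hC0 ε0 hε0tend g hgid
    have hεd : Tendsto (fun n : ℕ => ε0 n - ε0 (n - 1)) atTop (nhds 0) := by
      have h2 : Tendsto (fun n : ℕ => ε0 (n - 1)) atTop (nhds 0) :=
        hε0tend.comp (tendsto_sub_atTop_nat 1)
      have := hε0tend.sub h2
      rw [sub_zero] at this
      exact this
    have main := core.sub hεd
    rw [sub_zero] at main
    apply main.congr'
    filter_upwards [eventually_ge_atTop 1] with n hn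
    obtain ⟨n', rfl⟩ : ∃ n', n = n' + 1 := ⟨n - 1, (Nat.succ_pred_eq_of_pos hn).symm⟩
    have ht : (∑' k : ℕ, 1 / ((s₀ : ℝ) * W ((m : ℤ) * ((n' + 1 : ℕ) + k) + l₀) +
        (s₁ : ℝ) * W ((m : ℤ) * ((n' + 1 : ℕ) + k) + l₁)))
        = ∑' k : ℕ, 1 / g ((n' + 1) + k) := by
      apply tsum_congr
      intro k
      simp only [hgdef]
      push_cast
      ring_nf
    have hsub : ((s₀ : ℝ) * W ((m : ℤ) * (n' + 1 : ℕ) + l₀) -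
        (s₀ : ℝ) * W ((m : ℤ) * (((n' + 1 : ℕ) : ℤ) - 1) + l₀) +
        (s₁ : ℝ) * W ((m : ℤ) * (n' + 1 : ℕ) + l₁) -
        (s₁ : ℝ) * W ((m : ℤ) * (((n' + 1 : ℕ) : ℤ) - 1) + l₁))
        = g (n' + 1) - g n' := by
      simp only [hgdef]
      push_cast
      ring_nf
    rw [ht, hsub]
    simp only [Nat.add_sub_cancel]
    rw [hgid (n' + 1), hgid n', pow_succ]
    have hrne : r ≠ 0 := ne_of_gt hr0
    field_simp
    ring
  · -- degenerate case : α = 1, β = 0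
    push_neg at h1
    have hple : (p:ℝ) < 2 := by
      rw [hα] at h1
      nlinarith [hsqpos]
    have hpeq : p = 1 := by
      have : p < 2 := by exact_mod_cast hple
      omega
    have hq0 : q = 0 := by
      have hqlow : (0:ℤ) ≤ q := by
        have : (0:ℝ) < (p:ℝ)^2 + 4*q := hdisc
        have hp2 : ((p:ℝ))^2 = 1 := by rw [hpeq]; norm_num
        have : (-1:ℝ) < 4 * q := by nlinarith
        have : (-1:ℤ) < 4 * q := by exact_mod_cast this
        omega
      have hqhigh : (q:ℝ) ≤ 0 := by
        rw [hα] at h1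
        have hsqle : Real.sqrt ((p : ℝ) ^ 2 + 4 * q) ≤ 2 - p := by linarith
        nlinarith [hsq, hsqpos]
      have : q ≤ 0 := by exact_mod_cast hqhigh
      omega
    have hd1 : ((p : ℝ) ^ 2 + 4 * q) = 1 := by
      rw [hpeq, hq0]; norm_num
    have hsq1 : Real.sqrt ((p : ℝ) ^ 2 + 4 * q) = 1 := by
      rw [hd1, Real.sqrt_one]
    have hαval : α = 1 := by
      rw [hα, hsq1, hpeq]; norm_num
    have hβval : β = 0 := by
      rw [hβ, hsq1, hpeq]; norm_num
    have hWone : ∀ z : ℤ, 1 ≤ z → W z = c₁ := by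
      intro z hz
      rw [hW, hαval, hβval, one_zpow, zero_zpow _ (by omega)]
      ring
    have hSc : ((s₀:ℝ) + (s₁:ℝ)) * c₁ ≠ 0 := by
      have h0 : (0:ℝ) < (s₀:ℝ) + (s₁:ℝ) := by
        rcases hs with hs | hs
        · have : (1:ℝ) ≤ (s₀:ℝ) := by exact_mod_cast Nat.one_le_iff_ne_zero.mpr hs
          have h2 : (0:ℝ) ≤ (s₁:ℝ) := by positivity
          linarith
        · have : (1:ℝ) ≤ (s₁:ℝ) := by exact_mod_cast Nat.one_le_iff_ne_zero.mpr hs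
          have h2 : (0:ℝ) ≤ (s₀:ℝ) := by positivity
          linarith
      positivity
    apply tendsto_const_nhds.congr'
    filter_upwards [eventually_ge_atTop 2] with n hn
    have hn' : (2:ℤ) ≤ (n:ℤ) := by exact_mod_cast hn
    have hterm : ∀ k : ℕ, (s₀ : ℝ) * W ((m : ℤ) * ((n:ℤ) + (k:ℤ)) + l₀) +
        (s₁ : ℝ) * W ((m : ℤ) * ((n:ℤ) + (k:ℤ)) + l₁) = ((s₀:ℝ) + (s₁:ℝ)) * c₁ := by
      intro k
      have hj : (1:ℤ) ≤ (n:ℤ) + (k:ℤ) := by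
        have : (0:ℤ) ≤ (k:ℤ) := Int.ofNat_nonneg k
        omega
      rw [hWone _ (hidx l₀ hl₀ _ hj), hWone _ (hidx l₁ hl₁ _ hj)]
      ring
    have htsum : (∑' k : ℕ, 1 / ((s₀ : ℝ) * W ((m : ℤ) * ((n:ℤ) + (k:ℤ)) + l₀) +
        (s₁ : ℝ) * W ((m : ℤ) * ((n:ℤ) + (k:ℤ)) + l₁))) = 0 := by
      have he : (fun k : ℕ => 1 / ((s₀ : ℝ) * W ((m : ℤ) * ((n:ℤ) + (k:ℤ)) + l₀) +
          (s₁ : ℝ) * W ((m : ℤ) * ((n:ℤ) + (k:ℤ)) + l₁)))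
          = fun _ : ℕ => 1 / (((s₀:ℝ) + (s₁:ℝ)) * c₁) := by
        funext k; rw [hterm k]
      rw [he]
      apply tsum_eq_zero_of_not_summable
      intro hsum
      have hc0 : (1 : ℝ) / (((s₀:ℝ) + (s₁:ℝ)) * c₁) = 0 :=
        tendsto_nhds_unique tendsto_const_nhds hsum.tendsto_atTop_zero
      rw [div_eq_zero_iff] at hc0
      rcases hc0 with h | h
      · exact one_ne_zero h
      · exact hSc h
    have hz1 : (1:ℤ) ≤ (m:ℤ) * (n:ℤ) + l₀ := hidx l₀ hl₀ _ (by omega)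
    have hz2 : (1:ℤ) ≤ (m:ℤ) * ((n:ℤ) - 1) + l₀ := hidx l₀ hl₀ _ (by omega)
    have hz3 : (1:ℤ) ≤ (m:ℤ) * (n:ℤ) + l₁ := hidx l₁ hl₁ _ (by omega)
    have hz4 : (1:ℤ) ≤ (m:ℤ) * ((n:ℤ) - 1) + l₁ := hidx l₁ hl₁ _ (by omega)
    rw [eq_comm]
    rw [htsum, hWone _ hz1, hWone _ hz2, hWone _ hz3, hWone _ hz4]
    simp
end

section
/- Let p ≥ 1 and q be integers with p² + 4q > 0 and p² + 2q − 2 < p·√(p² + 4q), set α = (p + √(p² + 4q))/2, β = (p − √(p² + 4q))/2, let a, b be integers with c₁ = (b − aβ)/(α − β) > 0, and define Wₙ = c₁αⁿ − c₂βⁿ where c₂ = (b − aα)/(α − β). Let m, t ≥ 1 be integers. Then lim_{n→∞} [ (Σ_{k=n}^{∞} (−1)^k/(Σ_{i=0}^{t} W_{mk+i}))^{−1} − ((−1)^n/(α − 1))·(W_{mn+t+1} − W_{mn} + W_{m(n−1)+t+1} − W_{m(n−1)}) ] = 0. -/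
open Filter


lemma aux_tail_s12 (c d x y : ℝ) (hc : 0 < c) (hx : 1 < x) (hy : |y| < 1)
    (S : ℕ → ℝ) (hS : ∀ j, S j = c * x ^ j - d * y ^ j) :
    Tendsto (fun n : ℕ =>
      (∑' k : ℕ, (-1 : ℝ) ^ k / S (n + k))⁻¹ - c * (x ^ n + x ^ (n - 1)))
      atTop (nhds 0) := by
  have hx0 : (0:ℝ) < x := lt_trans one_pos hx
  have hy0 : (0:ℝ) ≤ |y| := abs_nonneg y
  have hyx : |y| < x := hy.trans hx
  have hr1 : x⁻¹ < 1 := inv_lt_one_of_one_lt₀ hx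
  have hr0 : (0:ℝ) < x⁻¹ := inv_pos.2 hx0
  -- eventual lower bound on S
  have hev : ∀ᶠ j in atTop, c / 2 * x ^ j ≤ S j := by
    have h1 : Tendsto (fun j : ℕ => |d| * (|y| / x) ^ j) atTop (nhds 0) := by
      have := tendsto_pow_atTop_nhds_zero_of_norm_lt_one
        (show ‖|y| / x‖ < 1 by
          rw [Real.norm_eq_abs, abs_of_nonneg (by positivity)]
          rw [div_lt_one hx0]; exact hyx)
      simpa using this.const_mul |d|
    have h2 := h1.eventually_lt_const (show (0:ℝ) < c / 2 by positivity)
    filter_upwards [h2] with j hj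
    have hb : |d * y ^ j| ≤ c / 2 * x ^ j := by
      have : |d * y ^ j| = |d| * (|y| / x) ^ j * x ^ j := by
        rw [abs_mul, abs_pow, div_pow]
        field_simp
      rw [this]
      have : (0:ℝ) < x ^ j := by positivity
      nlinarith [hj.le]
    rw [hS j]
    have := abs_le.1 hb
    nlinarith [this.1, this.2]
  obtain ⟨N, hN⟩ := eventually_atTop.1 hev
  have hSpos : ∀ j, N ≤ j → 0 < S j := fun j hj =>
    lt_of_lt_of_le (by positivity) (hN j hj)
  -- constants
  set w : ℝ := |y| / x ^ 2 with hw_def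
  have hw0 : 0 ≤ w := by positivity
  have hw1 : w < 1 := by
    rw [hw_def, div_lt_one (by positivity)]
    nlinarith
  set K : ℝ := 2 * |d| / c ^ 2 with hK_def
  have hK0 : 0 ≤ K := by positivity
  set L : ℝ := c⁻¹ * (1 + x⁻¹)⁻¹ with hL_def
  have hL0 : 0 < L := by
    apply mul_pos (inv_pos.2 hc) (inv_pos.2 (by linarith))
  -- the error function
  set h : ℕ → ℝ := fun j => (S j)⁻¹ - (c * x ^ j)⁻¹ with hh_def
  clear_value w K L h
  have hhb : ∀ j, N ≤ j → |h j| ≤ K * w ^ j := by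
    intro j hj
    have hSj := hSpos j hj
    have hcx : (0:ℝ) < c * x ^ j := by positivity
    have : h j = (c * x ^ j - S j) / (S j * (c * x ^ j)) := by
      simp only [hh_def]
      exact inv_sub_inv (ne_of_gt hSj) (ne_of_gt hcx)
    rw [this, abs_div, abs_of_pos (mul_pos hSj hcx)]
    have hnum : c * x ^ j - S j = d * y ^ j := by rw [hS]; ring
    rw [hnum]
    have hstep : |d * y ^ j| / (S j * (c * x ^ j)) ≤
        |d * y ^ j| / ((c / 2 * x ^ j) * (c * x ^ j)) := by
      gcongr <;> first | positivity | exact hN j hj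
    refine hstep.trans (le_of_eq ?_)
    have hxx : (x ^ 2) ^ j = x ^ j * x ^ j := by
      rw [← pow_mul, two_mul, pow_add]
    rw [abs_mul, abs_pow, hK_def, hw_def, div_pow, hxx]
    field_simp
  -- geometric part
  have hnorm : ‖-x⁻¹‖ < 1 := by
    rw [norm_neg, Real.norm_eq_abs, abs_of_pos hr0]; exact hr1
  have hgeo : ∀ n : ℕ, (fun k : ℕ => (-1:ℝ) ^ k * (c * x ^ (n + k))⁻¹)
      = fun k : ℕ => (c * x ^ n)⁻¹ * (-x⁻¹) ^ k := by
    intro n; funext k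
    rw [pow_add, neg_pow x⁻¹ k, inv_pow]
    have h1 : x ^ k ≠ 0 := by positivity
    field_simp
  have hsum1 : ∀ n : ℕ, Summable (fun k : ℕ => (-1:ℝ) ^ k * (c * x ^ (n + k))⁻¹) := by
    intro n; rw [hgeo n]
    exact (summable_geometric_of_norm_lt_one hnorm).mul_left _
  have htsum1 : ∀ n : ℕ, ∑' k : ℕ, (-1:ℝ) ^ k * (c * x ^ (n + k))⁻¹ = L * (x⁻¹) ^ n := by
    intro n
    rw [hgeo n, tsum_mul_left, tsum_geometric_of_norm_lt_one hnorm, hL_def,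
      sub_neg_eq_add, mul_inv, inv_pow]
    ring
  -- error part summability
  have hptb : ∀ n : ℕ, N ≤ n → ∀ k : ℕ, ‖(-1:ℝ) ^ k * h (n + k)‖ ≤ (K * w ^ n) * w ^ k := by
    intro n hn k
    rw [norm_mul, norm_pow, norm_neg, norm_one, one_pow, one_mul, Real.norm_eq_abs]
    calc |h (n + k)| ≤ K * w ^ (n + k) := hhb (n + k) (le_trans hn (Nat.le_add_right n k))
      _ = (K * w ^ n) * w ^ k := by rw [pow_add]; ring
  have hwsum : ∀ n : ℕ, Summable (fun k : ℕ => (K * w ^ n) * w ^ k) := by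
    intro n; exact (summable_geometric_of_lt_one hw0 hw1).mul_left _
  have hsumh : ∀ n : ℕ, N ≤ n → Summable (fun k : ℕ => (-1:ℝ) ^ k * h (n + k)) := by
    intro n hn
    exact Summable.of_norm_bounded (hwsum n) (hptb n hn)
  have hsplit : ∀ n : ℕ, (fun k : ℕ => (-1:ℝ) ^ k / S (n + k))
      = fun k : ℕ => (-1:ℝ) ^ k * (c * x ^ (n + k))⁻¹ + (-1:ℝ) ^ k * h (n + k) := by
    intro n; funext k
    rw [hh_def, div_eq_mul_inv]
    ring
  have hU : ∀ n : ℕ, N ≤ n → (∑' k : ℕ, (-1:ℝ) ^ k / S (n + k))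
      = L * (x⁻¹) ^ n + ∑' k : ℕ, (-1:ℝ) ^ k * h (n + k) := by
    intro n hn
    rw [hsplit n, Summable.tsum_add (hsum1 n) (hsumh n hn), htsum1 n]
  have hHbound : ∀ n : ℕ, N ≤ n →
      ‖∑' k : ℕ, (-1:ℝ) ^ k * h (n + k)‖ ≤ (K / (1 - w)) * w ^ n := by
    intro n hn
    have hnsum : Summable (fun k : ℕ => ‖(-1:ℝ) ^ k * h (n + k)‖) :=
      Summable.of_nonneg_of_le (fun k => norm_nonneg _) (hptb n hn) (hwsum n)
    calc ‖∑' k : ℕ, (-1:ℝ) ^ k * h (n + k)‖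
        ≤ ∑' k : ℕ, ‖(-1:ℝ) ^ k * h (n + k)‖ := norm_tsum_le_tsum_norm hnsum
      _ ≤ ∑' k : ℕ, (K * w ^ n) * w ^ k := Summable.tsum_le_tsum (hptb n hn) hnsum (hwsum n)
      _ = (K * w ^ n) * (1 - w)⁻¹ := by
          rw [tsum_mul_left, tsum_geometric_of_lt_one hw0 hw1]
      _ = (K / (1 - w)) * w ^ n := by ring
  -- second eventual bound
  have hwx : w * x = |y| / x := by
    rw [hw_def, pow_two]
    field_simp
  have hwx1 : w * x < 1 := by rw [hwx, div_lt_one hx0]; exact hyx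
  have hwx0 : 0 ≤ w * x := by positivity
  have hev2 : ∀ᶠ n : ℕ in atTop, (K / (1 - w)) * w ^ n ≤ L / 2 * (x⁻¹) ^ n := by
    have h1 : Tendsto (fun n : ℕ => (K / (1 - w)) * (w * x) ^ n) atTop (nhds 0) := by
      have := tendsto_pow_atTop_nhds_zero_of_norm_lt_one
        (show ‖w * x‖ < 1 by rwa [Real.norm_eq_abs, abs_of_nonneg hwx0])
      simpa using this.const_mul (K / (1 - w))
    filter_upwards [h1.eventually_lt_const (show (0:ℝ) < L / 2 by linarith)] with n hn
    have hxin : (0:ℝ) < (x⁻¹) ^ n := by positivity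
    have hkey : w ^ n = (w * x) ^ n * (x⁻¹) ^ n := by
      rw [← mul_pow, mul_assoc, mul_inv_cancel₀ (ne_of_gt hx0), mul_one]
    rw [hkey]
    nlinarith [hn.le]
  obtain ⟨N₂, hN₂⟩ := eventually_atTop.1 hev2
  set C : ℝ := (K / (1 - w)) * (2 / (L * L)) with hC_def
  clear_value C
  apply squeeze_zero_norm' (a := fun n : ℕ => C * |y| ^ n)
  · filter_upwards [eventually_ge_atTop N, eventually_ge_atTop N₂,
      eventually_ge_atTop 1] with n hn1 hn2 hn3
    have hxn0 : (0:ℝ) < x ^ n := by positivity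
    have hrn0 : (0:ℝ) < (x⁻¹) ^ n := by positivity
    have hw1' : (0:ℝ) < 1 - w := by linarith
    have hHb1 := hHbound n hn1
    have hHb2 : ‖∑' k : ℕ, (-1:ℝ) ^ k * h (n + k)‖ ≤ L / 2 * (x⁻¹) ^ n :=
      hHb1.trans (hN₂ n hn2)
    set H := ∑' k : ℕ, (-1:ℝ) ^ k * h (n + k) with hH_def
    clear_value H
    have hG0 : (0:ℝ) < L * (x⁻¹) ^ n := mul_pos hL0 hrn0
    have hT : (∑' k : ℕ, (-1:ℝ) ^ k / S (n + k)) = L * (x⁻¹) ^ n + H := by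
      rw [hH_def]; exact hU n hn1
    have habs := abs_le.1 (by rwa [Real.norm_eq_abs] at hHb2)
    have hTlb : L / 2 * (x⁻¹) ^ n ≤ L * (x⁻¹) ^ n + H := by
      linarith [habs.1]
    have hTpos : (0:ℝ) < L * (x⁻¹) ^ n + H := lt_of_lt_of_le (mul_pos (by linarith) hrn0) hTlb
    have hxn : x ^ n = x * x ^ (n - 1) := by
      conv_lhs => rw [show n = (n - 1) + 1 by omega]
      rw [pow_succ']
    have hGinv : (L * (x⁻¹) ^ n)⁻¹ = c * (x ^ n + x ^ (n - 1)) := by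
      rw [hL_def, hxn, inv_pow]
      have h1 : x ^ (n - 1) ≠ 0 := by positivity
      have h2 : (1:ℝ) + x⁻¹ ≠ 0 := by positivity
      field_simp
      rw [hxn]
    have hdiff : (L * (x⁻¹) ^ n + H)⁻¹ - c * (x ^ n + x ^ (n - 1))
        = -H / ((L * (x⁻¹) ^ n + H) * (L * (x⁻¹) ^ n)) := by
      rw [← hGinv, inv_sub_inv (ne_of_gt hTpos) (ne_of_gt hG0),
        show L * (x⁻¹) ^ n - (L * (x⁻¹) ^ n + H) = -H by ring]
    simp only [hT, hdiff]
    rw [norm_div, norm_neg, Real.norm_eq_abs ((L * (x⁻¹) ^ n + H) * (L * (x⁻¹) ^ n)),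
      abs_of_pos (mul_pos hTpos hG0)]
    have hwxx : w * (x * x) = |y| := by
      rw [hw_def, pow_two]
      field_simp
    have hyn : w ^ n * (x ^ n * x ^ n) = |y| ^ n := by
      calc w ^ n * (x ^ n * x ^ n) = (w * (x * x)) ^ n := by rw [mul_pow, mul_pow]
        _ = |y| ^ n := by rw [hwxx]
    have hstep : ‖H‖ / ((L * (x⁻¹) ^ n + H) * (L * (x⁻¹) ^ n))
        ≤ ((K / (1 - w)) * w ^ n) / ((L / 2 * (x⁻¹) ^ n) * (L * (x⁻¹) ^ n)) := by
      refine div_le_div₀ (mul_nonneg (div_nonneg hK0 hw1'.le) (pow_nonneg hw0 n)) hHb1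
        (mul_pos (mul_pos (by linarith) hrn0) hG0)
        (mul_le_mul_of_nonneg_right hTlb hG0.le)
    refine hstep.trans (le_of_eq ?_)
    have hxn' : (x⁻¹) ^ n = (x ^ n)⁻¹ := inv_pow x n
    have hL0' : L ≠ 0 := ne_of_gt hL0
    rw [hC_def, ← hyn, hxn']
    field_simp
  · have := tendsto_pow_atTop_nhds_zero_of_norm_lt_one
      (show ‖|y|‖ < 1 by rwa [Real.norm_eq_abs, abs_abs])
    have h2 := this.const_mul C
    rw [mul_zero] at h2
    exact h2

set_option maxHeartbeats 2000000 in
/-- Corollary 4.3: the inverse of the alternating tail sum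
`Σ_{k=n}^∞ (−1)^k/(Σ_{i=0}^t W_{mk+i})` is asymptotically
`((−1)^n/(α−1))·(W_{mn+t+1} − W_{mn} + W_{m(n−1)+t+1} − W_{m(n−1)})`. -/
theorem inverse_alternating_tail_sum_consecutive (p q a b : ℤ) (α β c₁ c₂ : ℝ)
    (hp : 1 ≤ p)
    (hdisc : 0 < (p : ℝ) ^ 2 + 4 * q)
    (hcond : (p : ℝ) ^ 2 + 2 * q - 2 < p * Real.sqrt ((p : ℝ) ^ 2 + 4 * q))
    (hα : α = ((p : ℝ) + Real.sqrt ((p : ℝ) ^ 2 + 4 * q)) / 2)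
    (hβ : β = ((p : ℝ) - Real.sqrt ((p : ℝ) ^ 2 + 4 * q)) / 2)
    (hc₁ : c₁ = ((b : ℝ) - a * β) / (α - β))
    (hc₂ : c₂ = ((b : ℝ) - a * α) / (α - β))
    (hc₁pos : 0 < c₁)
    (W : ℤ → ℝ) (hW : ∀ n : ℤ, W n = c₁ * α ^ n - c₂ * β ^ n)
    (m t : ℕ) (hm : 1 ≤ m) (ht : 1 ≤ t) :
    Tendsto (fun n : ℕ =>
      (∑' k : ℕ, (-1 : ℝ) ^ (n + k) /
        (∑ i ∈ Finset.range (t + 1), W ((m : ℤ) * (n + k) + i)))⁻¹ -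
      ((-1 : ℝ) ^ n / (α - 1)) *
        (W ((m : ℤ) * n + t + 1) - W ((m : ℤ) * n) +
          W ((m : ℤ) * ((n : ℤ) - 1) + t + 1) - W ((m : ℤ) * ((n : ℤ) - 1))))
      atTop (nhds 0) := by
  have hD0 : 0 < Real.sqrt ((p : ℝ) ^ 2 + 4 * q) := Real.sqrt_pos.2 hdisc
  have hD2 : Real.sqrt ((p : ℝ) ^ 2 + 4 * q) ^ 2 = (p : ℝ) ^ 2 + 4 * q :=
    Real.sq_sqrt hdisc.le
  set D := Real.sqrt ((p : ℝ) ^ 2 + 4 * q) with hD_def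
  have hp1 : (1 : ℝ) ≤ (p : ℝ) := by exact_mod_cast hp
  have hsq : ((p : ℝ) - D) ^ 2 < 4 := by nlinarith
  have hβ1 : |β| < 1 := by
    rw [abs_lt, hβ]
    constructor <;> nlinarith [sq_nonneg ((p:ℝ) - D + 2), sq_nonneg ((p:ℝ) - D - 2)]
  by_cases hα1 : 1 < α
  · have hα0 : (0:ℝ) < α := lt_trans one_pos hα1
    have hαm1 : (0:ℝ) < α - 1 := by linarith
    set x : ℝ := α ^ m with hx_def
    set y : ℝ := β ^ m with hy_def
    have hx1 : 1 < x := one_lt_pow₀ hα1 (by omega)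
    have hy1 : |y| < 1 := by
      rw [hy_def, abs_pow]
      exact pow_lt_one₀ (abs_nonneg β) hβ1 (by omega)
    set A : ℝ := ∑ i ∈ Finset.range (t + 1), α ^ i with hA_def
    set B : ℝ := ∑ i ∈ Finset.range (t + 1), β ^ i with hB_def
    have hA0 : 0 < A := Finset.sum_pos (fun i _ => pow_pos hα0 i)
      (Finset.nonempty_range_iff.2 (Nat.succ_ne_zero t))
    have hgeomA : A * (α - 1) = α ^ (t + 1) - 1 := geom_sum_mul α (t + 1)
    have hWnat : ∀ j : ℕ, W (j : ℤ) = c₁ * α ^ j - c₂ * β ^ j := by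
      intro j
      rw [hW, zpow_natCast, zpow_natCast]
    set S : ℕ → ℝ := fun j => ∑ i ∈ Finset.range (t + 1), W ((m : ℤ) * j + i) with hS_def
    have hS : ∀ j : ℕ, S j = (c₁ * A) * x ^ j - (c₂ * B) * y ^ j := by
      intro j
      have hterm : ∀ i ∈ Finset.range (t + 1), W ((m : ℤ) * (j : ℤ) + (i : ℤ))
          = (c₁ * x ^ j) * α ^ i - (c₂ * y ^ j) * β ^ i := by
        intro i _
        have hcast : (m : ℤ) * (j : ℤ) + (i : ℤ) = ((m * j + i : ℕ) : ℤ) := by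
          push_cast
          ring
        rw [hcast, hWnat, pow_add, pow_mul, pow_add, pow_mul, hx_def, hy_def]
        ring
      calc S j = ∑ i ∈ Finset.range (t + 1),
            ((c₁ * x ^ j) * α ^ i - (c₂ * y ^ j) * β ^ i) := Finset.sum_congr rfl hterm
        _ = (c₁ * x ^ j) * A - (c₂ * y ^ j) * B := by
            rw [Finset.sum_sub_distrib, ← Finset.mul_sum, ← Finset.mul_sum, hA_def, hB_def]
        _ = (c₁ * A) * x ^ j - (c₂ * B) * y ^ j := by ring
    have haux := aux_tail_s12 (c₁ * A) (c₂ * B) x y (mul_pos hc₁pos hA0) hx1 hy1 S hS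
    set Cst : ℝ := c₂ * (β ^ (t + 1) - 1) / (α - 1) with hCst_def
    have hgeoy : Tendsto (fun n : ℕ => Cst * (y ^ n + y ^ (n - 1))) atTop (nhds 0) := by
      have h1 : Tendsto (fun n : ℕ => y ^ n) atTop (nhds 0) :=
        tendsto_pow_atTop_nhds_zero_of_norm_lt_one (by rwa [Real.norm_eq_abs])
      have h2 : Tendsto (fun n : ℕ => y ^ (n - 1)) atTop (nhds 0) :=
        h1.comp (tendsto_sub_atTop_nat 1)
      have h3 := (h1.add h2).const_mul Cst
      norm_num at h3
      exact h3
    have hg : Tendsto (fun n : ℕ =>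
        ((∑' k : ℕ, (-1:ℝ) ^ k / S (n + k))⁻¹ - (c₁ * A) * (x ^ n + x ^ (n - 1)))
          + Cst * (y ^ n + y ^ (n - 1))) atTop (nhds 0) := by
      have h3 := haux.add hgeoy
      norm_num at h3
      exact h3
    apply squeeze_zero_norm' ?_ (tendsto_zero_iff_norm_tendsto_zero.1 hg)
    filter_upwards [eventually_ge_atTop 1] with n hn
    have hinv : ((-1:ℝ) ^ n)⁻¹ = (-1:ℝ) ^ n := by
      rw [← inv_pow, inv_neg, inv_one]
    have htsum_eq : (∑' k : ℕ, (-1 : ℝ) ^ (n + k) /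
        (∑ i ∈ Finset.range (t + 1), W ((m : ℤ) * (n + k) + i)))
        = (-1:ℝ) ^ n * ∑' k : ℕ, (-1:ℝ) ^ k / S (n + k) := by
      rw [← tsum_mul_left]
      apply tsum_congr
      intro k
      have hfun : S (n + k) = ∑ i ∈ Finset.range (t + 1), W ((m : ℤ) * ((n : ℤ) + (k : ℤ)) + i) := by
        rw [hS_def]
        refine Finset.sum_congr rfl fun i _ => ?_
        have harg : (m : ℤ) * ((n + k : ℕ) : ℤ) + (i : ℤ)
            = (m : ℤ) * ((n : ℤ) + (k : ℤ)) + (i : ℤ) := by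
          push_cast
          ring
        rw [harg]
      rw [pow_add, mul_div_assoc, hfun]
    have hn' : ((n - 1 : ℕ) : ℤ) = (n : ℤ) - 1 := by omega
    have hV : W ((m : ℤ) * n + t + 1) - W ((m : ℤ) * n) +
          W ((m : ℤ) * ((n : ℤ) - 1) + t + 1) - W ((m : ℤ) * ((n : ℤ) - 1))
        = c₁ * (α ^ (t + 1) - 1) * (x ^ n + x ^ (n - 1))
          - c₂ * (β ^ (t + 1) - 1) * (y ^ n + y ^ (n - 1)) := by
      have e1 : (m : ℤ) * n + t + 1 = ((m * n + (t + 1) : ℕ) : ℤ) := by push_cast; ring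
      have e2 : (m : ℤ) * n = ((m * n : ℕ) : ℤ) := by push_cast; ring
      have e3 : (m : ℤ) * ((n : ℤ) - 1) + t + 1 = ((m * (n - 1) + (t + 1) : ℕ) : ℤ) := by
        push_cast [hn']
        ring
      have e4 : (m : ℤ) * ((n : ℤ) - 1) = ((m * (n - 1) : ℕ) : ℤ) := by
        push_cast [hn']
        ring
      rw [e1, e2, e3, e4, hWnat, hWnat, hWnat, hWnat]
      simp only [pow_add, pow_mul]
      rw [hx_def, hy_def]
      ring
    have hkey : ((-1 : ℝ) ^ n / (α - 1)) *
        (W ((m : ℤ) * n + t + 1) - W ((m : ℤ) * n) +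
          W ((m : ℤ) * ((n : ℤ) - 1) + t + 1) - W ((m : ℤ) * ((n : ℤ) - 1)))
        = (-1:ℝ) ^ n * ((c₁ * A) * (x ^ n + x ^ (n - 1)) - Cst * (y ^ n + y ^ (n - 1))) := by
      rw [hV, hCst_def, ← hgeomA]
      have hαm1' : α - 1 ≠ 0 := ne_of_gt hαm1
      field_simp
    rw [htsum_eq, mul_inv, hinv, hkey]
    rw [show (-1:ℝ) ^ n * (∑' k : ℕ, (-1:ℝ) ^ k / S (n + k))⁻¹
        - (-1:ℝ) ^ n * ((c₁ * A) * (x ^ n + x ^ (n - 1)) - Cst * (y ^ n + y ^ (n - 1)))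
        = (-1:ℝ) ^ n * (((∑' k : ℕ, (-1:ℝ) ^ k / S (n + k))⁻¹
            - (c₁ * A) * (x ^ n + x ^ (n - 1))) + Cst * (y ^ n + y ^ (n - 1))) by ring]
    rw [norm_mul, norm_pow, norm_neg, norm_one, one_pow, one_mul]
  · -- degenerate case : α = 1, p = 1, q = 0, β = 0
    push_neg at hα1
    have hple : (p : ℝ) < 2 := by
      rw [hα] at hα1; nlinarith
    have hp2 : p < 2 := by exact_mod_cast hple
    have hpeq : p = 1 := by omega
    have hpR : (p : ℝ) = 1 := by rw [hpeq]; norm_num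
    have hDle : D ≤ 1 := by rw [hα, hpR] at hα1; linarith
    have hq0 : q = 0 := by
      have hqle : (q : ℝ) ≤ 0 := by nlinarith
      have hqge : (-1 : ℝ) < 4 * q := by nlinarith
      have h1 : q ≤ 0 := by exact_mod_cast hqle
      have h2 : (-1 : ℤ) < 4 * q := by exact_mod_cast hqge
      omega
    have hqR : (q : ℝ) = 0 := by rw [hq0]; norm_num
    have hDeq : D = 1 := by
      have h1 : (D - 1) * (D + 1) = 0 := by nlinarith
      rcases mul_eq_zero.1 h1 with h | h
      · linarith
      · linarith
    have hαeq : α = 1 := by rw [hα, hDeq, hpR]; norm_num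
    have hβeq : β = 0 := by rw [hβ, hDeq, hpR]; norm_num
    set cc : ℝ := ((t : ℝ) + 1) * c₁ with hcc_def
    have hcc : 0 < cc := by positivity
    have hev : ∀ᶠ n : ℕ in atTop,
        (0 : ℝ) = (∑' k : ℕ, (-1 : ℝ) ^ (n + k) /
          (∑ i ∈ Finset.range (t + 1), W ((m : ℤ) * (n + k) + i)))⁻¹ -
        ((-1 : ℝ) ^ n / (α - 1)) *
          (W ((m : ℤ) * n + t + 1) - W ((m : ℤ) * n) +
            W ((m : ℤ) * ((n : ℤ) - 1) + t + 1) - W ((m : ℤ) * ((n : ℤ) - 1))) := by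
      filter_upwards [eventually_ge_atTop 1] with n hn
      have hWc : ∀ j : ℤ, 1 ≤ j → W j = c₁ := by
        intro j hj
        rw [hW, hαeq, hβeq, one_zpow, zero_zpow j (by omega)]
        ring
      have hm1 : (1 : ℤ) ≤ (m : ℤ) := by exact_mod_cast hm
      have hn1 : (1 : ℤ) ≤ (n : ℤ) := by exact_mod_cast hn
      have hSc : ∀ k : ℕ,
          (∑ i ∈ Finset.range (t + 1), W ((m : ℤ) * (n + k) + i)) = cc := by
        intro k
        have hk0 : (0 : ℤ) ≤ (k : ℤ) := Int.ofNat_nonneg k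
        have hconst : ∀ i ∈ Finset.range (t + 1),
            W ((m : ℤ) * ((n : ℤ) + (k : ℤ)) + (i : ℤ)) = c₁ := by
          intro i _
          apply hWc
          have hi0 : (0 : ℤ) ≤ (i : ℤ) := Int.ofNat_nonneg i
          nlinarith
        rw [Finset.sum_congr rfl hconst, Finset.sum_const, Finset.card_range,
          nsmul_eq_mul, hcc_def]
        push_cast
        ring
      have hns : ¬ Summable (fun k : ℕ => (-1 : ℝ) ^ (n + k) / cc) := by
        intro hs
        have h0 := hs.tendsto_atTop_zero
        have h1 := h0.abs
        have h2 : (fun k : ℕ => |(-1 : ℝ) ^ (n + k) / cc|) = fun _ : ℕ => cc⁻¹ := by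
          funext k
          rw [abs_div, abs_pow, abs_neg, abs_one, one_pow, abs_of_pos hcc, one_div]
        rw [h2, abs_zero] at h1
        have h3 : (0:ℝ) = cc⁻¹ := tendsto_nhds_unique h1 tendsto_const_nhds
        have h4 : 0 < cc⁻¹ := by positivity
        rw [← h3] at h4
        exact lt_irrefl 0 h4
      have htsum : (∑' k : ℕ, (-1 : ℝ) ^ (n + k) /
          (∑ i ∈ Finset.range (t + 1), W ((m : ℤ) * (n + k) + i))) = 0 := by
        rw [tsum_congr (fun k => by rw [hSc k])]
        exact tsum_eq_zero_of_not_summable hns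
      rw [htsum, inv_zero, hαeq]
      norm_num
    exact Tendsto.congr' hev tendsto_const_nhds
end
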